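/- arXiv:1504.03138 — 9 statements merged into one kernel-verified Lean document; each statement's English description precedes it below -/
import Mathlib

section
/- For every real number z > 0, the supremum over λ > 0 of (λ·z − exp(λ²) + 1) is at least √(log(z+1)) · z^{3/2} / (4·√z + 8). -/
lemma exp_sub_one_le_mul (x : ℝ) : Real.exp x - 1 ≤ x * Real.exp x := by
  have h := Real.add_one_le_exp (-x)
  rw [Real.exp_neg] at h
  have hx : 0 < Real.exp x := Real.exp_pos x
  have h2 := mul_le_mul_of_nonneg_right h hx.le
  rw [inv_mul_cancel₀ hx.ne'] at h2
  nlinarith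

set_option maxHeartbeats 1000000 in
/-- Lemma 7.2: For every real `z > 0`, the supremum over `λ > 0` of
`λ·z − exp(λ²) + 1` is at least `√(log(z+1)) · z^(3/2) / (4·√z + 8)`. -/
theorem sup_lower_bound (z : ℝ) (hz : 0 < z) :
    Real.sqrt (Real.log (z + 1)) * z ^ ((3 : ℝ) / 2) / (4 * Real.sqrt z + 8) ≤
      sSup {y : ℝ | ∃ l : ℝ, 0 < l ∧ y = l * z - Real.exp (l ^ 2) + 1} := by
  have hbdd : BddAbove {y : ℝ | ∃ l : ℝ, 0 < l ∧ y = l * z - Real.exp (l ^ 2) + 1} := by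
    refine ⟨z ^ 2 / 4, ?_⟩
    rintro y ⟨l, hl, rfl⟩
    have h1 : l ^ 2 + 1 ≤ Real.exp (l ^ 2) := by
      have := Real.add_one_le_exp (l ^ 2); linarith
    nlinarith [sq_nonneg (l - z / 2)]
  set s := Real.sqrt z with hs
  have hs0 : 0 < s := Real.sqrt_pos.mpr hz
  have hs2 : s ^ 2 = z := Real.sq_sqrt hz.le
  set L := Real.log (z + 1) with hL
  have hL0 : 0 < L := Real.log_pos (by linarith)
  have hLz : L ≤ z := by
    have := Real.log_le_sub_one_of_pos (show (0:ℝ) < z + 1 by linarith)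
    linarith
  set A := Real.sqrt L with hA
  have hA0 : 0 ≤ A := Real.sqrt_nonneg L
  have hA2 : A ^ 2 = L := Real.sq_sqrt hL0.le
  have hsL : A ≤ s := by rw [hA, hs]; exact Real.sqrt_le_sqrt hLz
  have hz32 : z ^ ((3:ℝ)/2) = z * s := by
    rw [show (3:ℝ)/2 = 1 + 1/2 by norm_num, Real.rpow_add hz, Real.rpow_one,
      hs, Real.sqrt_eq_rpow]
  rw [hz32]
  -- exp(L/2) ≤ s + 1
  have he : Real.exp (L/2) * Real.exp (L/2) = z + 1 := by
    rw [← Real.exp_add, show L/2 + L/2 = L by ring, hL, Real.exp_log (by linarith)]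
  have hexpL : Real.exp (L/2) ≤ s + 1 := by
    nlinarith [Real.exp_pos (L/2)]
  by_cases hc : (z / (2 * (s + 1))) ^ 2 ≤ L / 2
  · -- large z case: take l = z / (2(s+1))
    set t := z / (2 * (s + 1)) with ht
    have ht0 : 0 < t := by positivity
    have hmem : t * z - Real.exp (t ^ 2) + 1 ∈
        {y : ℝ | ∃ l : ℝ, 0 < l ∧ y = l * z - Real.exp (l ^ 2) + 1} := ⟨t, ht0, rfl⟩
    refine le_trans ?_ (le_csSup hbdd hmem)
    have h1 : Real.exp (t ^ 2) - 1 ≤ t ^ 2 * (s + 1) := by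
      have h2 := exp_sub_one_le_mul (t ^ 2)
      have h3 : Real.exp (t ^ 2) ≤ Real.exp (L / 2) := Real.exp_le_exp.mpr hc
      have h4 : t ^ 2 * Real.exp (t ^ 2) ≤ t ^ 2 * (s + 1) :=
        mul_le_mul_of_nonneg_left (le_trans h3 hexpL) (sq_nonneg t)
      linarith
    have h2 : A * (z * s) / (4 * s + 8) ≤ t * z - t ^ 2 * (s + 1) := by
      have heq : t * z - t ^ 2 * (s + 1) = z ^ 2 / (4 * (s + 1)) := by
        rw [ht]; field_simp; ring
      rw [heq, div_le_div_iff₀ (by positivity) (by positivity), ← hs2]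
      nlinarith [mul_le_mul_of_nonneg_right hsL (show (0:ℝ) ≤ 4 * s^3 * (s+1) by positivity),
        hs0.le, sq_nonneg s, pow_pos hs0 4]
    linarith
  · -- small z case: take l = sqrt(L/2)
    push_neg at hc
    set t := Real.sqrt (L / 2) with ht
    have ht0 : 0 < t := Real.sqrt_pos.mpr (by linarith)
    have ht2 : t ^ 2 = L / 2 := Real.sq_sqrt (by linarith)
    have htle : t ≤ z / (2 * (s + 1)) := by
      have h0 : (0:ℝ) ≤ z / (2 * (s + 1)) := by positivity
      calc t = Real.sqrt (L / 2) := ht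
        _ ≤ Real.sqrt ((z / (2 * (s + 1))) ^ 2) := Real.sqrt_le_sqrt hc.le
        _ = z / (2 * (s + 1)) := Real.sqrt_sq h0
    have hmem : t * z - Real.exp (t ^ 2) + 1 ∈
        {y : ℝ | ∃ l : ℝ, 0 < l ∧ y = l * z - Real.exp (l ^ 2) + 1} := ⟨t, ht0, rfl⟩
    refine le_trans ?_ (le_csSup hbdd hmem)
    have h1 : Real.exp (t ^ 2) - 1 ≤ t ^ 2 * (s + 1) := by
      have h2 := exp_sub_one_le_mul (t ^ 2)
      have h3 : Real.exp (t ^ 2) ≤ s + 1 := by rw [ht2]; exact hexpL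
      nlinarith [sq_nonneg t]
    have htle' : t * (2 * (s + 1)) ≤ z := by
      rw [← le_div_iff₀ (by positivity)]; exact htle
    have h2 : t ^ 2 * (s + 1) ≤ t * z / 2 := by
      nlinarith [mul_le_mul_of_nonneg_left htle' ht0.le]
    -- A ≤ (3/2) t
    have hA15 : A ≤ (3/2) * t := by
      nlinarith [mul_pos ht0 ht0]
    have h3 : A * (z * s) / (4 * s + 8) ≤ t * z / 2 := by
      rw [div_le_div_iff₀ (by positivity) (by norm_num)]
      nlinarith [mul_le_mul_of_nonneg_right hA15 (show (0:ℝ) ≤ z * s * 2 by positivity),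
        mul_nonneg ht0.le hz.le, mul_nonneg (mul_nonneg ht0.le hz.le) hs0.le]
    linarith
end

section
/- Let d ≥ 1, ρ > 0 and p ≥ 1 be such that the half ball B = {z ∈ ℝ^d : ‖z‖ ≤ ρ and z₁ > 0} can be written as a disjoint union B = B₁ ∪ … ∪ B_p of p sets each of diameter at most ρ. Then for every finite set ξ ⊂ ℝ^d, 2·p·T_ξ + p·N_ξ ≥ Σ_{x ∈ ξ} deg_r(x)², where the right-degree is deg_r(x) = #((x + B) ∩ ξ). The same inequality holds with the left-degree deg_l(x) = #((x − B) ∩ ξ) in place of deg_r. -/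
open scoped Classical

/-- Number of edges of the disk graph with radius `ρ` on the finite set `ξ ⊂ ℝ^d`. -/
noncomputable def diskN {d : ℕ} (ρ : ℝ) (ξ : Finset (EuclideanSpace ℝ (Fin d))) : ℕ :=
  ((ξ.powersetCard 2).filter fun e => ∀ x ∈ e, ∀ y ∈ e, x ≠ y → dist x y ≤ ρ).card

/-- Number of triangles of the disk graph with radius `ρ` on the finite set `ξ ⊂ ℝ^d`. -/
noncomputable def diskT {d : ℕ} (ρ : ℝ) (ξ : Finset (EuclideanSpace ℝ (Fin d))) : ℕ :=
  ((ξ.powersetCard 3).filter fun e => ∀ x ∈ e, ∀ y ∈ e, x ≠ y → dist x y ≤ ρ).card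

private lemma triple_adj {E : Type*} [MetricSpace E] [DecidableEq E] {ρ : ℝ} {a b c : E}
    (hab : dist a b ≤ ρ) (hac : dist a c ≤ ρ) (hbc : dist b c ≤ ρ) :
    ∀ x ∈ ({a, b, c} : Finset E), ∀ y ∈ ({a, b, c} : Finset E), x ≠ y → dist x y ≤ ρ := by
  simp only [Finset.mem_insert, Finset.mem_singleton]
  rintro x (rfl | rfl | rfl) y (rfl | rfl | rfl) hxy <;>
    first
      | exact absurd rfl hxy
      | assumption
      | (rw [dist_comm]; assumption)

private lemma right_bound (d : ℕ) (hd : 0 < d) (ρ : ℝ)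
    (p : ℕ)
    (parts : Fin p → Set (EuclideanSpace ℝ (Fin d)))
    (hdisj : Pairwise (Function.onFun Disjoint parts))
    (hunion : (⋃ i, parts i) =
      {z : EuclideanSpace ℝ (Fin d) | ‖z‖ ≤ ρ ∧ 0 < z ⟨0, hd⟩})
    (hdiam : ∀ i, Metric.diam (parts i) ≤ ρ)
    (ξ : Finset (EuclideanSpace ℝ (Fin d))) :
    ∑ x ∈ ξ, ((ξ.filter fun y => ‖y - x‖ ≤ ρ ∧ 0 < (y - x) ⟨0, hd⟩).card) ^ 2
        ≤ 2 * p * diskT ρ ξ + p * diskN ρ ξ := by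
  -- basic helpers
  have coord : ∀ a b : (EuclideanSpace ℝ (Fin d)), 0 < (b - a) ⟨0, hd⟩ → a ⟨0, hd⟩ < b ⟨0, hd⟩ := by
    intro a b h
    rw [PiLp.sub_apply] at h
    linarith
  have hsub : ∀ i, parts i ⊆ {z : (EuclideanSpace ℝ (Fin d)) | ‖z‖ ≤ ρ ∧ 0 < z ⟨0, hd⟩} := by
    intro i
    rw [← hunion]
    exact Set.subset_iUnion parts i
  have huniq : ∀ z : (EuclideanSpace ℝ (Fin d)), ∀ i j, z ∈ parts i → z ∈ parts j → i = j := by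
    intro z i j hi hj
    by_contra h
    exact Set.disjoint_left.mp (hdisj h) hi hj
  set n : (EuclideanSpace ℝ (Fin d)) → Fin p → ℕ := fun x i => (ξ.filter fun y => y - x ∈ parts i).card with hn
  -- degree decomposition
  have hdeg : ∀ x : (EuclideanSpace ℝ (Fin d)), (ξ.filter fun y => ‖y - x‖ ≤ ρ ∧ 0 < (y - x) ⟨0, hd⟩).card
      = ∑ i, n x i := by
    intro x
    have key : ∀ y : (EuclideanSpace ℝ (Fin d)), (∑ i : Fin p, if y - x ∈ parts i then 1 else 0)
        = if ‖y - x‖ ≤ ρ ∧ 0 < (y - x) ⟨0, hd⟩ then 1 else 0 := by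
      intro y
      by_cases h : ‖y - x‖ ≤ ρ ∧ 0 < (y - x) ⟨0, hd⟩
      · have hmem : y - x ∈ ⋃ i, parts i := by rw [hunion]; exact h
        obtain ⟨i, hi⟩ := Set.mem_iUnion.mp hmem
        rw [if_pos h, Finset.sum_eq_single i]
        · rw [if_pos hi]
        · intro j _ hj
          rw [if_neg]
          intro hmem'
          exact hj (huniq _ _ _ hmem' hi)
        · intro habs; exact absurd (Finset.mem_univ i) habs
      · rw [if_neg h, Finset.sum_eq_zero]
        intro i _
        rw [if_neg]
        intro hmem'
        exact h (hsub i hmem')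
    rw [Finset.card_filter]
    simp only [hn, Finset.card_filter]
    rw [Finset.sum_comm]
    exact Finset.sum_congr rfl fun y _ => (key y).symm
  -- Cauchy-Schwarz
  have hcs : ∀ x : (EuclideanSpace ℝ (Fin d)), ((ξ.filter fun y => ‖y - x‖ ≤ ρ ∧ 0 < (y - x) ⟨0, hd⟩).card) ^ 2
      ≤ p * ∑ i, n x i ^ 2 := by
    intro x
    rw [hdeg x]
    have h1 := sq_sum_le_card_mul_sum_sq (s := (Finset.univ : Finset (Fin p)))
      (f := fun i => (n x i : ℤ))
    simp only [Finset.card_univ, Fintype.card_fin] at h1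
    exact_mod_cast h1
  -- square as ordered pairs
  have hsq : ∀ x : (EuclideanSpace ℝ (Fin d)), ∀ i, n x i ^ 2
      = ((ξ ×ˢ ξ).filter fun q => q.1 - x ∈ parts i ∧ q.2 - x ∈ parts i).card := by
    intro x i
    rw [Finset.filter_product (fun a => a - x ∈ parts i) (fun a => a - x ∈ parts i),
      Finset.card_product, sq]
  -- split diagonal
  have hdiag : ∀ x : (EuclideanSpace ℝ (Fin d)), ∀ i,
      ((ξ ×ˢ ξ).filter fun q =>
        (q.1 - x ∈ parts i ∧ q.2 - x ∈ parts i) ∧ q.1 = q.2).card = n x i := by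
    intro x i
    apply Finset.card_bij (fun q _ => q.1)
    · intro q hq
      simp only [Finset.mem_filter, Finset.mem_product] at hq ⊢
      exact ⟨hq.1.1, hq.2.1.1⟩
    · intro q hq q' hq' h
      simp only [Finset.mem_filter] at hq hq'
      have h2 : q.2 = q'.2 := by rw [← hq.2.2, ← hq'.2.2, h]
      exact Prod.ext h h2
    · intro y hy
      simp only [Finset.mem_filter] at hy
      refine ⟨(y, y), ?_, rfl⟩
      simp only [Finset.mem_filter, Finset.mem_product]
      exact ⟨⟨hy.1, hy.1⟩, ⟨hy.2, hy.2⟩, trivial⟩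
  have hsplit : ∀ x : (EuclideanSpace ℝ (Fin d)), ∀ i, n x i ^ 2 = n x i +
      ((ξ ×ˢ ξ).filter fun q =>
        (q.1 - x ∈ parts i ∧ q.2 - x ∈ parts i) ∧ ¬ q.1 = q.2).card := by
    intro x i
    have h := Finset.card_filter_add_card_filter_not
      (s := (ξ ×ˢ ξ).filter fun q => q.1 - x ∈ parts i ∧ q.2 - x ∈ parts i)
      (p := fun q => q.1 = q.2)
    rw [Finset.filter_filter, Finset.filter_filter] at h
    rw [hsq x i, ← h, hdiag x i]
  -- edge bound : sum of degrees ≤ diskN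
  set S : Finset ((EuclideanSpace ℝ (Fin d)) × (EuclideanSpace ℝ (Fin d))) :=
    (ξ ×ˢ ξ).filter fun q => ‖q.2 - q.1‖ ≤ ρ ∧ 0 < (q.2 - q.1) ⟨0, hd⟩ with hS
  have hsumdeg : ∑ x ∈ ξ, (ξ.filter fun y => ‖y - x‖ ≤ ρ ∧ 0 < (y - x) ⟨0, hd⟩).card
      = S.card := by
    rw [hS, Finset.card_filter, Finset.sum_product]
    exact Finset.sum_congr rfl fun x _ => Finset.card_filter _ _
  have hSN : S.card ≤ diskN ρ ξ := by
    apply Finset.card_le_card_of_injOn (fun q => ({q.1, q.2} : Finset (EuclideanSpace ℝ (Fin d))))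
    · intro q hq
      simp only [hS, Finset.mem_coe, Finset.mem_filter, Finset.mem_product] at hq
      obtain ⟨⟨hq1, hq2⟩, h1, h2⟩ := hq
      have hne : q.1 ≠ q.2 := fun h => absurd (coord _ _ h2) (by rw [h]; exact lt_irrefl _)
      have hdist : dist q.1 q.2 ≤ ρ := by rw [dist_eq_norm, ← norm_sub_rev]; exact h1
      refine Finset.mem_filter.mpr ⟨Finset.mem_powersetCard.mpr ⟨?_, ?_⟩, ?_⟩
      · intro a ha
        simp only [Finset.mem_insert, Finset.mem_singleton] at ha
        rcases ha with rfl | rfl <;> assumption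
      · exact Finset.card_pair hne
      · intro a ha b hb hab
        simp only [Finset.mem_insert, Finset.mem_singleton] at ha hb
        rcases ha with rfl | rfl <;> rcases hb with rfl | rfl <;>
          first
            | exact absurd rfl hab
            | exact hdist
            | (rw [dist_comm]; exact hdist)
    · intro q hq q' hq' he
      simp only [hS, Finset.mem_coe, Finset.mem_filter, Finset.mem_product] at hq hq'
      have hlt : q.1 ⟨0, hd⟩ < q.2 ⟨0, hd⟩ := coord _ _ hq.2.2
      have hlt' : q'.1 ⟨0, hd⟩ < q'.2 ⟨0, hd⟩ := coord _ _ hq'.2.2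
      have he' : ({q.1, q.2} : Finset (EuclideanSpace ℝ (Fin d))) = {q'.1, q'.2} := he
      have m1 : q'.1 = q.1 ∨ q'.1 = q.2 := by
        have h0 : q'.1 ∈ ({q'.1, q'.2} : Finset (EuclideanSpace ℝ (Fin d))) := by simp
        rw [← he'] at h0
        simpa using h0
      have m2 : q'.2 = q.1 ∨ q'.2 = q.2 := by
        have h0 : q'.2 ∈ ({q'.1, q'.2} : Finset (EuclideanSpace ℝ (Fin d))) := by simp
        rw [← he'] at h0
        simpa using h0
      rcases m1 with h1 | h1
      · rcases m2 with h2 | h2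
        · rw [h1, h2] at hlt'; exact absurd hlt' (lt_irrefl _)
        · exact (Prod.ext h1 h2).symm
      · rcases m2 with h2 | h2
        · rw [h1, h2] at hlt'; exact absurd (hlt.trans hlt') (lt_irrefl _)
        · rw [h1, h2] at hlt'; exact absurd hlt' (lt_irrefl _)
  -- triangle bound
  set A : Finset ((EuclideanSpace ℝ (Fin d)) × (EuclideanSpace ℝ (Fin d)) × (EuclideanSpace ℝ (Fin d))) :=
    (ξ ×ˢ ξ ×ˢ ξ).filter fun t => t.2.1 ≠ t.2.2 ∧
      ∃ i, t.2.1 - t.1 ∈ parts i ∧ t.2.2 - t.1 ∈ parts i with hA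
  have hoff : ∑ x ∈ ξ, ∑ i : Fin p,
      ((ξ ×ˢ ξ).filter fun q =>
        (q.1 - x ∈ parts i ∧ q.2 - x ∈ parts i) ∧ ¬ q.1 = q.2).card = A.card := by
    rw [hA, Finset.card_filter, Finset.sum_product]
    refine Finset.sum_congr rfl fun x _ => ?_
    simp only [Finset.card_filter]
    rw [Finset.sum_comm]
    refine Finset.sum_congr rfl fun q _ => ?_
    by_cases hne : q.1 = q.2
    · rw [if_neg (by tauto), Finset.sum_eq_zero]
      intro i _
      rw [if_neg (by tauto)]
    · by_cases hex : ∃ i, q.1 - x ∈ parts i ∧ q.2 - x ∈ parts i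
      · obtain ⟨i, hi⟩ := hex
        rw [if_pos ⟨hne, i, hi⟩, Finset.sum_eq_single i]
        · rw [if_pos ⟨hi, hne⟩]
        · intro j _ hj
          rw [if_neg]
          rintro ⟨⟨hj1, -⟩, -⟩
          exact hj (huniq _ _ _ hj1 hi.1)
        · intro habs; exact absurd (Finset.mem_univ i) habs
      · rw [if_neg (fun hcon => hex hcon.2), Finset.sum_eq_zero]
        intro i _
        rw [if_neg]
        rintro ⟨hi, -⟩
        exact hex ⟨i, hi⟩
  have hfactA : ∀ t ∈ A, t.1 ⟨0, hd⟩ < t.2.1 ⟨0, hd⟩ ∧ t.1 ⟨0, hd⟩ < t.2.2 ⟨0, hd⟩ ∧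
      t.2.1 ≠ t.2.2 := by
    intro t ht
    simp only [hA, Finset.mem_filter] at ht
    obtain ⟨-, hne, i, h1, h2⟩ := ht
    exact ⟨coord _ _ (hsub i h1).2, coord _ _ (hsub i h2).2, hne⟩
  have hAT : A.card ≤ 2 * diskT ρ ξ := by
    have himg : A.image (fun t => ({t.1, t.2.1, t.2.2} : Finset (EuclideanSpace ℝ (Fin d)))) ⊆
        (ξ.powersetCard 3).filter fun e => ∀ x ∈ e, ∀ y ∈ e, x ≠ y → dist x y ≤ ρ := by
      intro e he
      obtain ⟨t, ht, rfl⟩ := Finset.mem_image.mp he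
      obtain ⟨hc1, hc2, hne⟩ := hfactA t ht
      simp only [hA, Finset.mem_filter, Finset.mem_product] at ht
      obtain ⟨⟨hx, hy, hz⟩, -, i, hyi, hzi⟩ := ht
      have hxy : t.1 ≠ t.2.1 := fun h => absurd hc1 (by rw [h]; exact lt_irrefl _)
      have hxz : t.1 ≠ t.2.2 := fun h => absurd hc2 (by rw [h]; exact lt_irrefl _)
      have h1 : dist t.1 t.2.1 ≤ ρ := by
        rw [dist_eq_norm, ← norm_sub_rev]; exact (hsub i hyi).1
      have h2 : dist t.1 t.2.2 ≤ ρ := by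
        rw [dist_eq_norm, ← norm_sub_rev]; exact (hsub i hzi).1
      have hbd : Bornology.IsBounded (parts i) := by
        apply Metric.isBounded_closedBall (x := (0 : (EuclideanSpace ℝ (Fin d)))) (r := ρ) |>.subset
        intro w hw
        have := (hsub i hw).1
        simpa [Metric.mem_closedBall, dist_eq_norm] using this
      have h3 : dist t.2.1 t.2.2 ≤ ρ := by
        rw [← dist_sub_right t.2.1 t.2.2 t.1]
        exact (Metric.dist_le_diam_of_mem hbd hyi hzi).trans (hdiam i)
      refine Finset.mem_filter.mpr ⟨Finset.mem_powersetCard.mpr ⟨?_, ?_⟩,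
        triple_adj h1 h2 h3⟩
      · intro a ha
        simp only [Finset.mem_insert, Finset.mem_singleton] at ha
        rcases ha with rfl | rfl | rfl <;> assumption
      · rw [Finset.card_insert_of_notMem (by simp [hxy, hxz]),
          Finset.card_pair hne]
    have hfiber : ∀ e ∈ A.image (fun t => ({t.1, t.2.1, t.2.2} : Finset (EuclideanSpace ℝ (Fin d)))),
        (A.filter fun t => ({t.1, t.2.1, t.2.2} : Finset (EuclideanSpace ℝ (Fin d))) = e).card ≤ 2 := by
      intro e he
      rcases (A.filter fun t => ({t.1, t.2.1, t.2.2} : Finset (EuclideanSpace ℝ (Fin d))) = e).eq_empty_or_nonempty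
        with h | ⟨t₀, ht₀⟩
      · simp [h]
      · have ht₀A : t₀ ∈ A := (Finset.mem_filter.mp ht₀).1
        have ht₀e : ({t₀.1, t₀.2.1, t₀.2.2} : Finset (EuclideanSpace ℝ (Fin d))) = e := (Finset.mem_filter.mp ht₀).2
        obtain ⟨hc01, hc02, hne0⟩ := hfactA t₀ ht₀A
        have hsubpair : (A.filter fun t => ({t.1, t.2.1, t.2.2} : Finset (EuclideanSpace ℝ (Fin d))) = e)
            ⊆ {t₀, (t₀.1, t₀.2.2, t₀.2.1)} := by
          intro t ht
          have htA : t ∈ A := (Finset.mem_filter.mp ht).1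
          have hte : ({t.1, t.2.1, t.2.2} : Finset (EuclideanSpace ℝ (Fin d))) = e := (Finset.mem_filter.mp ht).2
          obtain ⟨hc1, hc2, hne⟩ := hfactA t htA
          have heq : ({t.1, t.2.1, t.2.2} : Finset (EuclideanSpace ℝ (Fin d))) = {t₀.1, t₀.2.1, t₀.2.2} := by
            rw [hte, ht₀e]
          have mem1 : ∀ a : (EuclideanSpace ℝ (Fin d)), a ∈ ({t.1, t.2.1, t.2.2} : Finset (EuclideanSpace ℝ (Fin d))) →
              a = t₀.1 ∨ a = t₀.2.1 ∨ a = t₀.2.2 := by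
            intro a ha
            rw [heq] at ha
            simpa using ha
          have mem2 : ∀ a : (EuclideanSpace ℝ (Fin d)), a ∈ ({t₀.1, t₀.2.1, t₀.2.2} : Finset (EuclideanSpace ℝ (Fin d))) →
              a = t.1 ∨ a = t.2.1 ∨ a = t.2.2 := by
            intro a ha
            rw [← heq] at ha
            simpa using ha
          -- first components agree
          have hx : t.1 = t₀.1 := by
            rcases mem1 t.1 (by simp) with h | h | h
            · exact h
            all_goals {
              rcases mem2 t₀.1 (by simp) with h' | h' | h'
              · exact h'.symm
              all_goals {
              exfalso
              have hA : t₀.1 ⟨0, hd⟩ < t.1 ⟨0, hd⟩ := by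
                rw [h]; first | exact hc01 | exact hc02
              have hB : t.1 ⟨0, hd⟩ < t₀.1 ⟨0, hd⟩ := by
                rw [h']; first | exact hc1 | exact hc2
              linarith } }
          have hy1 : t.2.1 ≠ t₀.1 := by
            rw [← hx]; intro h; rw [h] at hc1; exact absurd hc1 (lt_irrefl _)
          have hz1 : t.2.2 ≠ t₀.1 := by
            rw [← hx]; intro h; rw [h] at hc2; exact absurd hc2 (lt_irrefl _)
          rcases mem1 t.2.1 (by simp) with h | h | h
          · exact absurd h hy1
          · -- t.2.1 = t₀.2.1, so t.2.2 = t₀.2.2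
            have hz : t.2.2 = t₀.2.2 := by
              rcases mem1 t.2.2 (by simp) with h' | h' | h'
              · exact absurd h' hz1
              · exfalso; exact hne (h.trans h'.symm)
              · exact h'
            have : t = t₀ := Prod.ext hx (Prod.ext h hz)
            simp [this]
          · -- t.2.1 = t₀.2.2, so t.2.2 = t₀.2.1
            have hz : t.2.2 = t₀.2.1 := by
              rcases mem1 t.2.2 (by simp) with h' | h' | h'
              · exact absurd h' hz1
              · exact h'
              · exfalso; exact hne (h.trans h'.symm)
            have : t = (t₀.1, t₀.2.2, t₀.2.1) := Prod.ext hx (Prod.ext h hz)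
            simp [this]
        calc (A.filter fun t => ({t.1, t.2.1, t.2.2} : Finset (EuclideanSpace ℝ (Fin d))) = e).card
            ≤ ({t₀, (t₀.1, t₀.2.2, t₀.2.1)} : Finset ((EuclideanSpace ℝ (Fin d)) × (EuclideanSpace ℝ (Fin d)) × (EuclideanSpace ℝ (Fin d)))).card :=
              Finset.card_le_card hsubpair
          _ ≤ 2 := Finset.card_insert_le _ _ |>.trans (by simp)
    calc A.card ≤ 2 * (A.image (fun t => ({t.1, t.2.1, t.2.2} : Finset (EuclideanSpace ℝ (Fin d))))).card :=
          Finset.card_le_mul_card_image _ 2 hfiber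
      _ ≤ 2 * diskT ρ ξ := Nat.mul_le_mul_left _ (Finset.card_le_card himg)
  -- assemble
  calc ∑ x ∈ ξ, ((ξ.filter fun y => ‖y - x‖ ≤ ρ ∧ 0 < (y - x) ⟨0, hd⟩).card) ^ 2
      ≤ ∑ x ∈ ξ, p * ∑ i, n x i ^ 2 := Finset.sum_le_sum fun x _ => hcs x
    _ = p * ∑ x ∈ ξ, ∑ i, n x i ^ 2 := by rw [Finset.mul_sum]
    _ = p * (∑ x ∈ ξ, ∑ i, n x i + ∑ x ∈ ξ, ∑ i : Fin p,
        ((ξ ×ˢ ξ).filter fun q =>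
          (q.1 - x ∈ parts i ∧ q.2 - x ∈ parts i) ∧ ¬ q.1 = q.2).card) := by
        rw [← Finset.sum_add_distrib]
        congr 1
        refine Finset.sum_congr rfl fun x _ => ?_
        rw [← Finset.sum_add_distrib]
        exact Finset.sum_congr rfl fun i _ => hsplit x i
    _ = p * (S.card + A.card) := by
        rw [hoff]
        congr 2
        rw [← hsumdeg]
        exact Finset.sum_congr rfl fun x _ => (hdeg x).symm
    _ ≤ p * (diskN ρ ξ + 2 * diskT ρ ξ) :=
        Nat.mul_le_mul_left _ (Nat.add_le_add hSN hAT)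
    _ = 2 * p * diskT ρ ξ + p * diskN ρ ξ := by ring

/-- Lemma 6.2: if the half ball `B = {z : ‖z‖ ≤ ρ, z₁ > 0}` can be partitioned into `p`
sets of diameter at most `ρ`, then `2·p·T_ξ + p·N_ξ ≥ Σ_{x∈ξ} deg_r(x)²`, and the same
with the left-degree instead of the right-degree. -/
theorem triangle_edge_degree_bound (d : ℕ) (hd : 0 < d) (ρ : ℝ) (hρ : 0 < ρ)
    (p : ℕ) (hp : 1 ≤ p)
    (parts : Fin p → Set (EuclideanSpace ℝ (Fin d)))
    (hdisj : Pairwise (Function.onFun Disjoint parts))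
    (hunion : (⋃ i, parts i) =
      {z : EuclideanSpace ℝ (Fin d) | ‖z‖ ≤ ρ ∧ 0 < z ⟨0, hd⟩})
    (hdiam : ∀ i, Metric.diam (parts i) ≤ ρ)
    (ξ : Finset (EuclideanSpace ℝ (Fin d))) :
    (∑ x ∈ ξ, ((ξ.filter fun y => ‖y - x‖ ≤ ρ ∧ 0 < (y - x) ⟨0, hd⟩).card) ^ 2
        ≤ 2 * p * diskT ρ ξ + p * diskN ρ ξ) ∧
    (∑ x ∈ ξ, ((ξ.filter fun y => ‖x - y‖ ≤ ρ ∧ 0 < (x - y) ⟨0, hd⟩).card) ^ 2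
        ≤ 2 * p * diskT ρ ξ + p * diskN ρ ξ) := by
  refine ⟨right_bound d hd ρ p parts hdisj hunion hdiam ξ, ?_⟩
  set e : (EuclideanSpace ℝ (Fin d)) ↪ (EuclideanSpace ℝ (Fin d)) := ⟨Neg.neg, neg_injective⟩ with he
  have hemb : ∀ a : (EuclideanSpace ℝ (Fin d)), e a = -a := fun a => rfl
  have hcount : ∀ k : ℕ,
      (((ξ.map e).powersetCard k).filter fun s =>
        ∀ a ∈ s, ∀ b ∈ s, a ≠ b → dist a b ≤ ρ).card
      = ((ξ.powersetCard k).filter fun s =>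
        ∀ a ∈ s, ∀ b ∈ s, a ≠ b → dist a b ≤ ρ).card := by
    intro k
    rw [Finset.powersetCard_map, Finset.filter_map, Finset.card_map]
    congr 1
    apply Finset.filter_congr
    intro s _
    simp only [Function.comp, Finset.mapEmbedding_apply]
    constructor
    · intro h a ha b hb hab
      have := h (e a) (Finset.mem_map_of_mem e ha) (e b) (Finset.mem_map_of_mem e hb)
        (fun hcon => hab (e.injective hcon))
      simpa [hemb, dist_neg_neg] using this
    · intro h a ha b hb hab
      obtain ⟨a', ha', rfl⟩ := Finset.mem_map.mp ha
      obtain ⟨b', hb', rfl⟩ := Finset.mem_map.mp hb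
      have hne : a' ≠ b' := fun hc => hab (by rw [hc])
      simpa [hemb, dist_neg_neg] using h a' ha' b' hb' hne
  have hN : diskN ρ (ξ.map e) = diskN ρ ξ := hcount 2
  have hT : diskT ρ (ξ.map e) = diskT ρ ξ := hcount 3
  have hmain := right_bound d hd ρ p parts hdisj hunion hdiam (ξ.map e)
  rw [hN, hT] at hmain
  refine le_trans (le_of_eq ?_) hmain
  rw [Finset.sum_map]
  refine Finset.sum_congr rfl fun x _ => ?_
  congr 1
  have hfilt : ((ξ.map e).filter fun y => ‖y - e x‖ ≤ ρ ∧ 0 < (y - e x) ⟨0, hd⟩)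
      = (ξ.filter fun y => ‖x - y‖ ≤ ρ ∧ 0 < (x - y) ⟨0, hd⟩).map e := by
    rw [Finset.filter_map]
    congr 1
    apply Finset.filter_congr
    intro y _
    have hkey : e y - e x = x - y := by
      rw [hemb, hemb]
      abel
    simp only [Function.comp, hkey]
  rw [hfilt, Finset.card_map]
end

section
/- Let d ≥ 1, ρ > 0 and p ≥ 1 be such that the half ball B = {z ∈ ℝ^d : ‖z‖ ≤ ρ and z₁ > 0} can be written as a disjoint union of p sets each of diameter at most ρ. Then for every finite set ξ ⊂ ℝ^d, Σ_{x ∈ ξ} deg(x)² ≤ (8√2/3)·p·N_ξ^{3/2} + 4·p·N_ξ ≤ (8√2/3 + 4)·p·N_ξ^{3/2}. -/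
open scoped Classical

/-- Degree of the vertex `x` in the disk graph with radius `ρ` on the finite set `ξ ⊂ ℝ^d`. -/
noncomputable def diskDeg {d : ℕ} (ρ : ℝ) (ξ : Finset (EuclideanSpace ℝ (Fin d)))
    (x : EuclideanSpace ℝ (Fin d)) : ℕ :=
  (ξ.filter fun y => y ≠ x ∧ dist x y ≤ ρ).card

open scoped RealInnerProductSpace

theorem exists_good_direction {E : Type*} [NormedAddCommGroup E] [InnerProductSpace ℝ E]
    [Nontrivial E] (D : Finset E) (hD : ∀ v ∈ D, v ≠ 0) :
    ∃ u : E, u ≠ 0 ∧ ∀ v ∈ D, ⟪u, v⟫ ≠ 0 := by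
  classical
  induction D using Finset.induction_on with
  | empty =>
    obtain ⟨u, hu⟩ := exists_ne (0 : E)
    exact ⟨u, hu, by simp⟩
  | @insert a s ha ih =>
    have ha0 : a ≠ 0 := hD a (Finset.mem_insert_self a s)
    obtain ⟨u, hu0, hu⟩ := ih (fun v hv => hD v (Finset.mem_insert_of_mem hv))
    set bad : Finset ℝ := (insert a s).image (fun w => -⟪u, w⟫ / ⟪a, w⟫) with hbad
    obtain ⟨t, ht⟩ := Infinite.exists_notMem_finset bad
    have haa : ⟪a, a⟫ ≠ 0 := fun h => ha0 (inner_self_eq_zero.1 h)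
    refine ⟨u + t • a, ?_, ?_⟩
    · intro h0
      have h1 : ⟪u + t • a, a⟫ = 0 := by rw [h0]; simp
      rw [inner_add_left, real_inner_smul_left] at h1
      have hcontra : t = -⟪u, a⟫ / ⟪a, a⟫ := by field_simp; linarith
      apply ht
      rw [hbad, hcontra]
      exact Finset.mem_image_of_mem _ (Finset.mem_insert_self a s)
    · intro v hv hinner
      rw [inner_add_left, real_inner_smul_left] at hinner
      rcases eq_or_ne ⟪a, v⟫ 0 with h | h
      · rw [h, mul_zero, add_zero] at hinner
        rcases Finset.mem_insert.1 hv with rfl | hv'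
        · exact haa h
        · exact hu v hv' hinner
      · apply ht
        rw [hbad]
        apply Finset.mem_image.2
        refine ⟨v, hv, ?_⟩
        field_simp
        linarith




lemma filter_inst_eq {α : Type*} (P : α → Prop) (i1 i2 : DecidablePred P) (s : Finset α) :
    @Finset.filter _ P i1 s = @Finset.filter _ P i2 s := by
  cases Subsingleton.elim i1 i2; rfl

theorem l1_abstract {V : Type*} [DecidableEq V] {p : ℕ} (O : Finset V) (g : V → Fin p)
    (f : V → ℝ) (hf : ∀ y ∈ O, ∀ z ∈ O, f y = f z → y = z) :
    O.card ^ 2 ≤ p * (2 * ((O ×ˢ O).filter fun q => g q.1 = g q.2 ∧ f q.1 < f q.2).card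
      + O.card) := by
  classical
  set P := (O ×ˢ O).filter (fun q => g q.1 = g q.2) with hP
  -- card P = sum of squares of fibers
  have hfib : P = Finset.univ.biUnion
      (fun i : Fin p => (O.filter fun y => g y = i) ×ˢ (O.filter fun y => g y = i)) := by
    ext ⟨a, b⟩
    simp only [hP, Finset.mem_filter, Finset.mem_product, Finset.mem_biUnion,
      Finset.mem_univ, true_and]
    constructor
    · rintro ⟨⟨ha, hb⟩, hg⟩
      exact ⟨g b, ⟨ha, hg⟩, ⟨hb, rfl⟩⟩
    · rintro ⟨i, ⟨ha, h1⟩, ⟨hb, h2⟩⟩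
      exact ⟨⟨ha, hb⟩, h1.trans h2.symm⟩
  have hPcard : P.card = ∑ i : Fin p, ((O.filter fun y => g y = i).card) ^ 2 := by
    rw [hfib, Finset.card_biUnion]
    · simp [Finset.card_product, sq]
    · intro i _ j _ hij
      rw [Function.onFun_apply, Finset.disjoint_left]
      rintro ⟨a, b⟩ hab hab'
      simp only [Finset.mem_product, Finset.mem_filter] at hab hab'
      exact hij (hab.1.2.symm.trans hab'.1.2)
  have hOcard : O.card = ∑ i : Fin p, (O.filter fun y => g y = i).card :=
    Finset.card_eq_sum_card_fiberwise (fun y _ => Finset.mem_univ (g y))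
  -- Cauchy-Schwarz over ℝ
  have hCS : (O.card : ℝ) ^ 2 ≤ (p : ℝ) * (P.card : ℝ) := by
    have := sq_sum_le_card_mul_sum_sq
      (s := (Finset.univ : Finset (Fin p))) (f := fun i => ((O.filter fun y => g y = i).card : ℝ))
    rw [hOcard, hPcard]
    push_cast
    simpa using this
  -- split P into <, >, diag
  have hsplit : P.card = 2 * (P.filter fun q => f q.1 < f q.2).card + O.card := by
    have h1 : (P.filter fun q => f q.1 < f q.2).card
        + (P.filter fun q => ¬ f q.1 < f q.2).card = P.card :=
      Finset.card_filter_add_card_filter_not _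
    have h2 : ((P.filter fun q => ¬ f q.1 < f q.2).filter fun q => f q.2 < f q.1).card
        + ((P.filter fun q => ¬ f q.1 < f q.2).filter fun q => ¬ f q.2 < f q.1).card
        = (P.filter fun q => ¬ f q.1 < f q.2).card :=
      Finset.card_filter_add_card_filter_not _
    have hswap : ((P.filter fun q => ¬ f q.1 < f q.2).filter fun q => f q.2 < f q.1).card
        = (P.filter fun q => f q.1 < f q.2).card := by
      apply Finset.card_nbij (fun q => (q.2, q.1))
      · rintro ⟨a, b⟩ hq
        simp only [P, Finset.mem_coe, Finset.mem_filter, Finset.mem_product] at hq ⊢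
        exact ⟨⟨⟨hq.1.1.1.2, hq.1.1.1.1⟩, hq.1.1.2.symm⟩, hq.2⟩
      · rintro ⟨a, b⟩ _ ⟨c, e⟩ _ h
        simp only [Prod.mk.injEq] at h
        simp [h.1, h.2]
      · rintro ⟨a, b⟩ hq
        simp only [P, Set.mem_image, Finset.coe_filter, Finset.mem_filter,
          Finset.mem_product, Set.mem_setOf_eq] at hq ⊢
        exact ⟨(b, a), ⟨⟨⟨⟨hq.1.1.2, hq.1.1.1⟩, hq.1.2.symm⟩, not_lt.2 hq.2.le⟩, hq.2⟩, rfl⟩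
    have hdiag : ((P.filter fun q => ¬ f q.1 < f q.2).filter fun q => ¬ f q.2 < f q.1).card
        = O.card := by
      apply Finset.card_nbij (fun q => q.1)
      · rintro ⟨a, b⟩ hq
        simp only [P, Finset.mem_coe, Finset.mem_filter, Finset.mem_product] at hq
        exact hq.1.1.1.1
      · rintro ⟨a, b⟩ ha ⟨c, e⟩ hc h
        simp only [P, Finset.mem_coe, Finset.mem_filter, Finset.mem_product] at ha hc
        have hab : a = b := hf a ha.1.1.1.1 b ha.1.1.1.2 (le_antisymm (not_lt.1 ha.2) (not_lt.1 ha.1.2))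
        have hce : c = e := hf c hc.1.1.1.1 e hc.1.1.1.2 (le_antisymm (not_lt.1 hc.2) (not_lt.1 hc.1.2))
        simp only at h
        simp [Prod.ext_iff, h, ← hab, ← hce]
      · intro a ha
        simp only [Finset.mem_coe] at ha
        refine ⟨(a, a), ?_, rfl⟩
        simp only [P, Finset.coe_filter, Set.mem_setOf_eq, Finset.mem_filter, Finset.mem_product]
        simp [ha]
    omega
  have hfilter : (P.filter fun q => f q.1 < f q.2)
      = ((O ×ˢ O).filter fun q => g q.1 = g q.2 ∧ f q.1 < f q.2) := by
    rw [hP, Finset.filter_filter]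
  rw [← hfilter]
  have : (O.card : ℝ) ^ 2 ≤ (p : ℝ) * (2 * (P.filter fun q => f q.1 < f q.2).card + O.card) := by
    rw [show ((2:ℝ) * (P.filter fun q => f q.1 < f q.2).card + O.card) = (P.card : ℝ) by
      rw [hsplit]; push_cast; ring]
    exact hCS
  exact_mod_cast this



theorem real_endgame {V : Type*} (ξ : Finset V) (deg m : V → ℕ) (T N p S : ℕ)
    (hmain : S ≤ 8 * p * T + 4 * p * N)
    (hT3 : 3 * T ≤ ∑ x ∈ ξ, m x)
    (hMN : ∀ x ∈ ξ, m x ≤ N)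
    (hMdeg : ∀ x ∈ ξ, 2 * m x ≤ deg x ^ 2)
    (hdegsum : ∑ x ∈ ξ, deg x ≤ 2 * N) :
    (S : ℝ) ≤ (8 * Real.sqrt 2 / 3) * (p : ℝ) * (N : ℝ) ^ ((3:ℝ)/2) + 4 * (p : ℝ) * (N : ℝ) := by
  have hN0 : (0:ℝ) ≤ (N:ℝ) := Nat.cast_nonneg N
  set s : ℝ := Real.sqrt ((N:ℝ)/2) with hs
  have hs0 : 0 ≤ s := Real.sqrt_nonneg _
  have h2s : Real.sqrt (2 * (N:ℝ)) = 2 * s := by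
    rw [hs, show (2:ℝ) * N = 2^2 * ((N:ℝ)/2) by ring, Real.sqrt_mul (by positivity),
      Real.sqrt_sq (by norm_num : (0:ℝ) ≤ 2)]
  have hNs : Real.sqrt (2 * (N:ℝ)) * s = N := by
    rw [hs, ← Real.sqrt_mul (by positivity), show (2:ℝ) * N * ((N:ℝ)/2) = (N:ℝ)^2 by ring,
      Real.sqrt_sq hN0]
  have hrpow : (N:ℝ) ^ ((3:ℝ)/2) = (N:ℝ) * Real.sqrt (N:ℝ) := by
    rcases Nat.eq_zero_or_pos N with h | h
    · simp [h, Real.zero_rpow (by norm_num : (3:ℝ)/2 ≠ 0)]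
    · have hpos : (0:ℝ) < N := by exact_mod_cast h
      rw [show (3:ℝ)/2 = 1 + 1/2 by norm_num, Real.rpow_add hpos, Real.rpow_one,
        ← Real.sqrt_eq_rpow]
  have hsN : 2 * (N:ℝ) * s = Real.sqrt 2 * ((N:ℝ) ^ ((3:ℝ)/2)) := by
    have e1 : s = Real.sqrt (N:ℝ) / Real.sqrt 2 := by
      rw [hs, show (N:ℝ)/2 = (N:ℝ) * (2:ℝ)⁻¹ by ring, Real.sqrt_mul hN0,
        Real.sqrt_inv, div_eq_mul_inv]
    have h22 : Real.sqrt 2 * Real.sqrt 2 = 2 := Real.mul_self_sqrt (by norm_num)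
    rw [hrpow, e1]
    have h2pos : (0:ℝ) < Real.sqrt 2 := Real.sqrt_pos.2 (by norm_num)
    field_simp
    linear_combination (-1 : ℝ) * ((N:ℝ) * Real.sqrt (N:ℝ)) * h22
  -- per-x bound
  have h1 : ∀ x ∈ ξ, (m x : ℝ) ≤ (deg x : ℝ) * s := by
    intro x hx
    have hm2 : 2 * (m x : ℝ) ≤ (deg x : ℝ) ^ 2 := by exact_mod_cast hMdeg x hx
    have hmN : (m x : ℝ) ≤ (N : ℝ) := by exact_mod_cast hMN x hx
    have hd0 : (0:ℝ) ≤ (deg x : ℝ) := Nat.cast_nonneg _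
    rcases le_or_gt ((deg x : ℝ)) (Real.sqrt (2 * (N:ℝ))) with h | h
    · have : (deg x : ℝ) ^ 2 ≤ (deg x : ℝ) * (2 * s) := by
        rw [sq]
        calc (deg x : ℝ) * deg x ≤ (deg x : ℝ) * Real.sqrt (2*(N:ℝ)) :=
              mul_le_mul_of_nonneg_left h hd0
          _ = (deg x : ℝ) * (2 * s) := by rw [h2s]
      linarith
    · calc (m x : ℝ) ≤ (N:ℝ) := hmN
        _ = Real.sqrt (2 * (N:ℝ)) * s := hNs.symm
        _ ≤ (deg x : ℝ) * s := mul_le_mul_of_nonneg_right h.le hs0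
  -- triangle real bound
  have hT : 3 * (T : ℝ) ≤ Real.sqrt 2 * ((N:ℝ) ^ ((3:ℝ)/2)) := by
    have c1 : (3 * T : ℝ) ≤ ∑ x ∈ ξ, (m x : ℝ) := by exact_mod_cast hT3
    have c2 : ∑ x ∈ ξ, (m x : ℝ) ≤ ∑ x ∈ ξ, (deg x : ℝ) * s := Finset.sum_le_sum h1
    have c3 : ∑ x ∈ ξ, (deg x : ℝ) * s = (∑ x ∈ ξ, (deg x:ℝ)) * s := by
      rw [Finset.sum_mul]
    have c4 : (∑ x ∈ ξ, (deg x:ℝ)) * s ≤ (2 * N) * s := by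
      apply mul_le_mul_of_nonneg_right _ hs0
      exact_mod_cast hdegsum
    rw [← hsN]
    push_cast at c1 ⊢
    linarith
  have hmainR : (S : ℝ) ≤ 8 * p * T + 4 * p * N := by exact_mod_cast hmain
  have hp0 : (0:ℝ) ≤ (p:ℝ) := Nat.cast_nonneg _
  have h8 : 8 * (p:ℝ) * (T:ℝ) ≤ (8 * Real.sqrt 2 / 3) * (p:ℝ) * ((N:ℝ) ^ ((3:ℝ)/2)) := by
    nlinarith [hT, hp0]
  linarith


theorem abstract_main {V : Type*} [DecidableEq V] (ξ : Finset V)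
    (A : V → V → Prop)
    (hsym : ∀ x y, A x y → A y x) (hirr : ∀ x y, A x y → y ≠ x)
    (f : V → ℝ) (hf : ∀ y ∈ ξ, ∀ z ∈ ξ, f y = f z → y = z)
    (p : ℕ) (hp : 1 ≤ p) (c : V → V → Fin p)
    (hcliq : ∀ x y z, A x y → A x z → f x < f y → f x < f z →
       c x y = c x z → f y < f z → A y z)
    (hcliq' : ∀ x y z, A x y → A x z → f y < f x → f z < f x →
       c y x = c z x → f y < f z → A y z)
    (N : ℕ) (hN : ((ξ ×ˢ ξ).filter fun q => A q.1 q.2 ∧ f q.1 < f q.2).card ≤ N) :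
    ∑ x ∈ ξ, ((ξ.filter fun y => A x y).card : ℝ) ^ 2 ≤
      (8 * Real.sqrt 2 / 3) * (p : ℝ) * (N : ℝ) ^ ((3:ℝ)/2) + 4 * (p : ℝ) * (N : ℝ) := by
  classical
  set SE := (ξ ×ˢ ξ).filter fun q => A q.1 q.2 ∧ f q.1 < f q.2 with hSE
  set O : V → Finset V := fun x => ξ.filter fun y => A x y ∧ f x < f y with hO
  set I : V → Finset V := fun x => ξ.filter fun y => A x y ∧ f y < f x with hI
  set Tri := (ξ ×ˢ ξ ×ˢ ξ).filter fun t =>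
    A t.1 t.2.1 ∧ A t.1 t.2.2 ∧ A t.2.1 t.2.2 ∧ f t.1 < f t.2.1 ∧ f t.2.1 < f t.2.2 with hTri
  set M : V → Finset (V × V) := fun x => (ξ ×ˢ ξ).filter fun q =>
    A q.1 q.2 ∧ f q.1 < f q.2 ∧ A x q.1 ∧ A x q.2 with hM
  set Sp : V → ℕ := fun x =>
    ((O x ×ˢ O x).filter fun q => c x q.1 = c x q.2 ∧ f q.1 < f q.2).card with hSp
  set Sm : V → ℕ := fun x =>
    ((I x ×ˢ I x).filter fun q => c q.1 x = c q.2 x ∧ f q.1 < f q.2).card with hSm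
  have hdeg : ∀ x ∈ ξ, (ξ.filter fun y => A x y).card = (O x).card + (I x).card := by
    intro x hx
    have h1 := (Finset.card_filter_add_card_filter_not
      (s := ξ.filter fun y => A x y) (p := fun y => f x < f y)).symm
    rw [Finset.filter_filter, Finset.filter_filter] at h1
    rw [h1, hO, hI]
    congr 1
    apply Finset.card_nbij id
    · intro y hy
      simp only [Finset.mem_coe, Finset.mem_filter] at hy ⊢
      refine ⟨hy.1, hy.2.1, lt_of_le_of_ne (not_lt.1 hy.2.2) ?_⟩
      intro he
      exact hirr x y hy.2.1 (hf y hy.1 x hx he)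
    · intro a _ b _ h; exact h
    · intro y hy
      simp only [Finset.coe_filter, Set.mem_setOf_eq] at hy ⊢
      exact ⟨y, ⟨hy.1, hy.2.1, not_lt.2 hy.2.2.le⟩, rfl⟩
  have hdO : ∑ x ∈ ξ, (O x).card ≤ N := by
    refine le_trans ?_ hN
    rw [← Finset.card_sigma]
    apply Finset.card_le_card_of_injOn (fun z => (z.1, z.2))
    · rintro ⟨x, y⟩ hz
      simp only [Finset.mem_coe, Finset.mem_sigma, hO, Finset.mem_filter] at hz
      simp only [Finset.mem_coe, hSE, Finset.mem_filter, Finset.mem_product]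
      exact ⟨⟨hz.1, hz.2.1⟩, hz.2.2.1, hz.2.2.2⟩
    · rintro ⟨x, y⟩ _ ⟨x', y'⟩ _ h
      simp only [Prod.mk.injEq] at h
      exact Sigma.ext h.1 (heq_of_eq h.2)
  have hdI : ∑ x ∈ ξ, (I x).card ≤ N := by
    refine le_trans ?_ hN
    rw [← Finset.card_sigma]
    apply Finset.card_le_card_of_injOn (fun z => (z.2, z.1))
    · rintro ⟨x, y⟩ hz
      simp only [Finset.mem_coe, Finset.mem_sigma, hI, Finset.mem_filter] at hz
      simp only [Finset.mem_coe, hSE, Finset.mem_filter, Finset.mem_product]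
      exact ⟨⟨hz.2.1, hz.1⟩, hsym _ _ hz.2.2.1, hz.2.2.2⟩
    · rintro ⟨x, y⟩ _ ⟨x', y'⟩ _ h
      simp only [Prod.mk.injEq] at h
      exact Sigma.ext h.2 (heq_of_eq h.1)
  have hMN : ∀ x ∈ ξ, (M x).card ≤ N := by
    intro x hx
    refine le_trans (Finset.card_le_card ?_) hN
    intro q hq
    simp only [hM, Finset.mem_filter] at hq
    simp only [hSE, Finset.mem_filter]
    exact ⟨hq.1, hq.2.1, hq.2.2.1⟩
  have hMdeg : ∀ x ∈ ξ, 2 * (M x).card ≤ ((ξ.filter fun y => A x y).card) ^ 2 := by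
    intro x hx
    set nb := ξ.filter fun y => A x y with hnb
    have hsub : M x ⊆ (nb ×ˢ nb).filter fun q => f q.1 < f q.2 := by
      rintro ⟨a, b⟩ hq
      simp only [hM, Finset.mem_filter, Finset.mem_product] at hq
      simp only [Finset.mem_filter, Finset.mem_product, hnb]
      exact ⟨⟨⟨hq.1.1, hq.2.2.2.1⟩, hq.1.2, hq.2.2.2.2⟩, hq.2.2.1⟩
    have hswap : ((nb ×ˢ nb).filter fun q => f q.1 < f q.2).card
        = ((nb ×ˢ nb).filter fun q => f q.2 < f q.1).card := by
      apply Finset.card_nbij (fun q => (q.2, q.1))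
      · rintro ⟨a, b⟩ hq
        simp only [Finset.mem_coe, Finset.mem_filter, Finset.mem_product] at hq ⊢
        exact ⟨⟨hq.1.2, hq.1.1⟩, hq.2⟩
      · rintro ⟨a, b⟩ _ ⟨a', b'⟩ _ h
        simp only [Prod.mk.injEq] at h
        simp [h.1, h.2]
      · rintro ⟨a, b⟩ hq
        simp only [Finset.coe_filter, Finset.mem_product, Set.mem_setOf_eq] at hq ⊢
        exact ⟨(b, a), ⟨⟨hq.1.2, hq.1.1⟩, hq.2⟩, rfl⟩
    have hdisj : Disjoint ((nb ×ˢ nb).filter fun q => f q.1 < f q.2)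
        ((nb ×ˢ nb).filter fun q => f q.2 < f q.1) := by
      rw [Finset.disjoint_left]
      rintro ⟨a, b⟩ h1 h2
      simp only [Finset.mem_filter] at h1 h2
      exact absurd h2.2 (not_lt.2 h1.2.le)
    have hun : ((nb ×ˢ nb).filter fun q => f q.1 < f q.2).card
        + ((nb ×ˢ nb).filter fun q => f q.2 < f q.1).card ≤ nb.card ^ 2 := by
      rw [← Finset.card_union_of_disjoint hdisj]
      calc _ ≤ (nb ×ˢ nb).card := Finset.card_le_card
              (Finset.union_subset (Finset.filter_subset _ _) (Finset.filter_subset _ _))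
        _ = nb.card ^ 2 := by rw [Finset.card_product, sq]
    have := Finset.card_le_card hsub
    omega
  have hSpT : ∑ x ∈ ξ, Sp x ≤ Tri.card := by
    rw [show ∑ x ∈ ξ, Sp x = (ξ.sigma fun x =>
      ((O x ×ˢ O x).filter fun q => c x q.1 = c x q.2 ∧ f q.1 < f q.2)).card from
      (Finset.card_sigma _ _).symm]
    apply Finset.card_le_card_of_injOn (fun z => (z.1, z.2.1, z.2.2))
    · rintro ⟨x, y, z⟩ hz
      simp only [Finset.mem_coe, Finset.mem_sigma, Finset.mem_filter, Finset.mem_product, hO] at hz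
      obtain ⟨hx, ⟨hy, hz'⟩, hc, hlt⟩ := hz
      simp only [Finset.mem_coe, hTri, Finset.mem_filter, Finset.mem_product]
      exact ⟨⟨hx, hy.1, hz'.1⟩, hy.2.1, hz'.2.1,
        hcliq x y z hy.2.1 hz'.2.1 hy.2.2 hz'.2.2 hc hlt, hy.2.2, hlt⟩
    · rintro ⟨x, y, z⟩ _ ⟨x', y', z'⟩ _ h
      simp only [Prod.mk.injEq] at h
      exact Sigma.ext h.1 (heq_of_eq (by simp [Prod.ext_iff, h.2.1, h.2.2]))
  have hSmT : ∑ x ∈ ξ, Sm x ≤ Tri.card := by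
    rw [show ∑ x ∈ ξ, Sm x = (ξ.sigma fun x =>
      ((I x ×ˢ I x).filter fun q => c q.1 x = c q.2 x ∧ f q.1 < f q.2)).card from
      (Finset.card_sigma _ _).symm]
    apply Finset.card_le_card_of_injOn (fun z => (z.2.1, z.2.2, z.1))
    · rintro ⟨x, y, z⟩ hz
      simp only [Finset.mem_coe, Finset.mem_sigma, Finset.mem_filter, Finset.mem_product, hI] at hz
      obtain ⟨hx, ⟨hy, hz'⟩, hc, hlt⟩ := hz
      simp only [Finset.mem_coe, hTri, Finset.mem_filter, Finset.mem_product]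
      exact ⟨⟨hy.1, hz'.1, hx⟩,
        hcliq' x y z hy.2.1 hz'.2.1 hy.2.2 hz'.2.2 hc hlt,
        hsym _ _ hy.2.1, hsym _ _ hz'.2.1, hlt, hz'.2.2⟩
    · rintro ⟨x, y, z⟩ _ ⟨x', y', z'⟩ _ h
      simp only [Prod.mk.injEq] at h
      exact Sigma.ext h.2.2 (heq_of_eq (by simp [Prod.ext_iff, h.1, h.2.1]))
  have hT3 : 3 * Tri.card ≤ ∑ x ∈ ξ, (M x).card := by
    rw [show ∑ x ∈ ξ, (M x).card = (ξ.sigma M).card from (Finset.card_sigma _ _).symm]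
    have hcard : 3 * Tri.card = (Tri ×ˢ ({0, 1, 2} : Finset ℕ)).card := by
      rw [Finset.card_product]
      norm_num [mul_comm]
    rw [hcard]
    apply Finset.card_le_card_of_injOn (fun z =>
      if z.2 = 0 then ⟨z.1.1, (z.1.2.1, z.1.2.2)⟩
      else if z.2 = 1 then ⟨z.1.2.1, (z.1.1, z.1.2.2)⟩
      else (⟨z.1.2.2, (z.1.1, z.1.2.1)⟩ : (_ : V) × V × V))
    · rintro ⟨⟨x, y, z⟩, k⟩ hz
      simp only [Finset.mem_coe, Finset.mem_product, hTri, Finset.mem_filter, Finset.mem_insert,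
        Finset.mem_singleton] at hz
      obtain ⟨⟨⟨hx, hy, hz'⟩, a1, a2, a3, l1, l2⟩, hk⟩ := hz
      rcases hk with rfl | rfl | rfl
      · simp only [if_pos rfl]
        simp only [Finset.mem_coe, Finset.mem_sigma, hM, Finset.mem_filter, Finset.mem_product]
        exact ⟨hx, ⟨hy, hz'⟩, a3, l2, a1, a2⟩
      · simp only [if_neg one_ne_zero, if_pos rfl]
        simp only [Finset.mem_coe, Finset.mem_sigma, hM, Finset.mem_filter, Finset.mem_product]
        exact ⟨hy, ⟨hx, hz'⟩, a2, l1.trans l2, hsym _ _ a1, a3⟩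
      · norm_num
        simp only [Finset.mem_coe, Finset.mem_sigma, hM, Finset.mem_filter, Finset.mem_product]
        exact ⟨hz', ⟨hx, hy⟩, a1, l1, hsym _ _ a2, hsym _ _ a3⟩
    · rintro ⟨⟨x, y, z⟩, k⟩ hzm ⟨⟨x', y', z'⟩, k'⟩ hzm' h
      rw [Finset.mem_coe, Finset.mem_product] at hzm hzm'
      simp only [hTri, Finset.mem_filter, Finset.mem_product, Finset.mem_insert,
        Finset.mem_singleton] at hzm hzm'
      obtain ⟨⟨⟨hx, hy, hz'⟩, a1, a2, a3, l1, l2⟩, hk⟩ := hzm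
      obtain ⟨⟨⟨hx', hy', hz''⟩, a1', a2', a3', l1', l2'⟩, hk'⟩ := hzm'
      rcases hk with rfl | rfl | rfl <;> rcases hk' with rfl | rfl | rfl <;>
        simp only [Nat.reduceEqDiff, reduceIte, if_true, if_false, eq_self_iff_true,
          Sigma.mk.inj_iff, heq_eq_eq, Prod.mk.injEq, one_ne_zero] at h <;>
      · obtain ⟨e1, e2, e3⟩ := h
        subst e1; subst e2; subst e3
        first
        | rfl
        | (exfalso; linarith)
  have hL1p : ∀ x ∈ ξ, (O x).card ^ 2 ≤ p * (2 * Sp x + (O x).card) := by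
    intro x hx
    exact l1_abstract (O x) (fun y => c x y) f
      (fun y hy z hz => hf y (Finset.mem_filter.1 hy).1 z (Finset.mem_filter.1 hz).1)
  have hL1m : ∀ x ∈ ξ, (I x).card ^ 2 ≤ p * (2 * Sm x + (I x).card) := by
    intro x hx
    exact l1_abstract (I x) (fun y => c y x) f
      (fun y hy z hz => hf y (Finset.mem_filter.1 hy).1 z (Finset.mem_filter.1 hz).1)
  have hmain : ∑ x ∈ ξ, ((ξ.filter fun y => A x y).card) ^ 2 ≤
      8 * p * Tri.card + 4 * p * N := by
    have h1 : ∀ x ∈ ξ, ((ξ.filter fun y => A x y).card) ^ 2 ≤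
        2 * (O x).card ^ 2 + 2 * (I x).card ^ 2 := by
      intro x hx
      rw [hdeg x hx]
      nlinarith [sq_nonneg ((O x).card - (I x).card : ℤ), sq_nonneg ((O x).card + (I x).card : ℤ)]
    calc ∑ x ∈ ξ, ((ξ.filter fun y => A x y).card) ^ 2
        ≤ ∑ x ∈ ξ, (2 * (O x).card ^ 2 + 2 * (I x).card ^ 2) := Finset.sum_le_sum h1
      _ ≤ ∑ x ∈ ξ, (2 * (p * (2 * Sp x + (O x).card)) + 2 * (p * (2 * Sm x + (I x).card))) := by
          refine Finset.sum_le_sum fun x hx => ?_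
          have := hL1p x hx; have := hL1m x hx; omega
      _ = 4*p*(∑ x ∈ ξ, Sp x) + 2*p*(∑ x ∈ ξ, (O x).card)
          + (4*p*(∑ x ∈ ξ, Sm x) + 2*p*(∑ x ∈ ξ, (I x).card)) := by
          rw [Finset.sum_congr rfl (fun x _ =>
            show 2 * (p * (2 * Sp x + (O x).card)) + 2 * (p * (2 * Sm x + (I x).card))
              = 4*p*Sp x + 2*p*(O x).card + (4*p*Sm x + 2*p*(I x).card) by ring)]
          rw [Finset.sum_add_distrib, Finset.sum_add_distrib, Finset.sum_add_distrib,
            ← Finset.mul_sum, ← Finset.mul_sum, ← Finset.mul_sum, ← Finset.mul_sum]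
      _ ≤ 8 * p * Tri.card + 4 * p * N := by
          have b1 := Nat.mul_le_mul_left (4*p) hSpT
          have b2 := Nat.mul_le_mul_left (4*p) hSmT
          have b3 := Nat.mul_le_mul_left (2*p) hdO
          have b4 := Nat.mul_le_mul_left (2*p) hdI
          have e2 : 4*p*(∑ x ∈ ξ, Sp x) ≤ 4*p*Tri.card := by
            simpa [mul_assoc] using b1
          have e3 : 4*p*(∑ x ∈ ξ, Sm x) ≤ 4*p*Tri.card := by
            simpa [mul_assoc] using b2
          have e4 : 2*p*(∑ x ∈ ξ, (O x).card) ≤ 2*p*N := by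
            simpa [mul_assoc] using b3
          have e5 : 2*p*(∑ x ∈ ξ, (I x).card) ≤ 2*p*N := by
            simpa [mul_assoc] using b4
          have : 4*p*Tri.card + 4*p*Tri.card = 8*p*Tri.card := by ring
          have : 2*p*N + 2*p*N = 4*p*N := by ring
          omega
  have hdegsum : ∑ x ∈ ξ, (ξ.filter fun y => A x y).card ≤ 2 * N := by
    have : ∑ x ∈ ξ, (ξ.filter fun y => A x y).card
        = (∑ x ∈ ξ, (O x).card) + ∑ x ∈ ξ, (I x).card := by
      rw [← Finset.sum_add_distrib]
      exact Finset.sum_congr rfl hdeg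
    omega
  have hcast : ∑ x ∈ ξ, ((ξ.filter fun y => A x y).card : ℝ) ^ 2
      = ((∑ x ∈ ξ, ((ξ.filter fun y => A x y).card) ^ 2 : ℕ) : ℝ) := by
    push_cast
    rfl
  rw [hcast]
  exact real_endgame ξ (fun x => (ξ.filter fun y => A x y).card) (fun x => (M x).card)
    Tri.card N p _ hmain hT3 hMN hMdeg hdegsum

/-- Corollary 6.3: if the half ball `B = {z : ‖z‖ ≤ ρ, z₁ > 0}` can be partitioned into `p`
sets of diameter at most `ρ`, then
`Σ_{x∈ξ} deg(x)² ≤ (8√2/3)·p·N_ξ^(3/2) + 4·p·N_ξ ≤ (8√2/3 + 4)·p·N_ξ^(3/2)`. -/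
theorem sum_sq_degrees_bound (d : ℕ) (hd : 0 < d) (ρ : ℝ) (hρ : 0 < ρ)
    (p : ℕ) (hp : 1 ≤ p)
    (parts : Fin p → Set (EuclideanSpace ℝ (Fin d)))
    (hdisj : Pairwise (Function.onFun Disjoint parts))
    (hunion : (⋃ i, parts i) =
      {z : EuclideanSpace ℝ (Fin d) | ‖z‖ ≤ ρ ∧ 0 < z ⟨0, hd⟩})
    (hdiam : ∀ i, Metric.diam (parts i) ≤ ρ)
    (ξ : Finset (EuclideanSpace ℝ (Fin d))) :
    (∑ x ∈ ξ, (diskDeg ρ ξ x : ℝ) ^ 2 ≤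
        (8 * Real.sqrt 2 / 3) * p * (diskN ρ ξ : ℝ) ^ ((3 : ℝ) / 2)
          + 4 * p * (diskN ρ ξ : ℝ)) ∧
    ((8 * Real.sqrt 2 / 3) * p * (diskN ρ ξ : ℝ) ^ ((3 : ℝ) / 2)
          + 4 * p * (diskN ρ ξ : ℝ) ≤
        (8 * Real.sqrt 2 / 3 + 4) * p * (diskN ρ ξ : ℝ) ^ ((3 : ℝ) / 2)) := by
  classical
  constructor
  · -- main inequality
    classical
    haveI : Nonempty (Fin d) := ⟨⟨0, hd⟩⟩
    haveI : Nontrivial (EuclideanSpace ℝ (Fin d)) := by infer_instance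
    -- good direction
    set D : Finset (EuclideanSpace ℝ (Fin d)) :=
      ((ξ ×ˢ ξ).filter fun q => q.1 ≠ q.2).image (fun q => q.1 - q.2) with hD
    obtain ⟨u, hu0, hu⟩ := exists_good_direction D (by
      intro v hv
      rw [hD] at hv
      obtain ⟨q, hq, rfl⟩ := Finset.mem_image.1 hv
      exact sub_ne_zero.2 (Finset.mem_filter.1 hq).2)
    set f : EuclideanSpace ℝ (Fin d) → ℝ := fun v => ⟪u, v⟫ with hf_def
    have hf : ∀ y ∈ ξ, ∀ z ∈ ξ, f y = f z → y = z := by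
      intro y hy z hz he
      by_contra hne
      refine hu (y - z) ?_ ?_
      · exact Finset.mem_image.2 ⟨(y, z), Finset.mem_filter.2
          ⟨Finset.mem_product.2 ⟨hy, hz⟩, hne⟩, rfl⟩
      · rw [inner_sub_right]
        simpa [hf_def] using sub_eq_zero.2 he
    -- reflection
    set e1 : EuclideanSpace ℝ (Fin d) := EuclideanSpace.single (⟨0, hd⟩ : Fin d) (1:ℝ) with he1_def
    have he1 : ‖e1‖ = 1 := by simp [he1_def, EuclideanSpace.norm_single]
    set u' : EuclideanSpace ℝ (Fin d) := ‖u‖⁻¹ • u with hu'_def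
    have hu' : ‖u'‖ = 1 := norm_smul_inv_norm hu0
    set R := Submodule.reflection (ℝ ∙ (u' - e1))ᗮ with hR_def
    have hR : R u' = e1 := Submodule.reflection_sub (by rw [hu', he1])
    have hcoord : ∀ v : EuclideanSpace ℝ (Fin d), ⟪e1, v⟫ = v ⟨0, hd⟩ := by
      intro v
      simp [he1_def, EuclideanSpace.inner_single_left]
    have hkey : ∀ w : EuclideanSpace ℝ (Fin d), (R w) ⟨0, hd⟩ = ‖u‖⁻¹ * ⟪u, w⟫ := by
      intro w
      rw [← hcoord (R w), ← hR, LinearIsometryEquiv.inner_map_map, hu'_def,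
        real_inner_smul_left]
    -- parts bounded
    have hsubB : ∀ i, parts i ⊆ Metric.closedBall (0 : EuclideanSpace ℝ (Fin d)) ρ := by
      intro i w hw
      have hw' : w ∈ {z : EuclideanSpace ℝ (Fin d) | ‖z‖ ≤ ρ ∧ 0 < z ⟨0, hd⟩} := by
        rw [← hunion]; exact Set.mem_iUnion.2 ⟨i, hw⟩
      simpa [mem_closedBall_zero_iff] using hw'.1
    -- the clique-cover map
    set cfun : EuclideanSpace ℝ (Fin d) → EuclideanSpace ℝ (Fin d) → Fin p := fun a b =>
      if h : ∃ i, R (b - a) ∈ parts i then h.choose else ⟨0, hp⟩ with hcfun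
    have hcmem : ∀ a b : EuclideanSpace ℝ (Fin d), dist a b ≤ ρ → 0 < ⟪u, b - a⟫ →
        R (b - a) ∈ parts (cfun a b) := by
      intro a b hdist hpos
      have hmem : R (b - a) ∈ {z : EuclideanSpace ℝ (Fin d) | ‖z‖ ≤ ρ ∧ 0 < z ⟨0, hd⟩} := by
        constructor
        · rw [LinearIsometryEquiv.norm_map]
          rw [← dist_eq_norm']
          exact hdist
        · rw [hkey]
          have : (0:ℝ) < ‖u‖⁻¹ := inv_pos.2 (norm_pos_iff.2 hu0)
          positivity
      rw [← hunion] at hmem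
      obtain ⟨i, hi⟩ := Set.mem_iUnion.1 hmem
      have hex : ∃ j, R (b - a) ∈ parts j := ⟨i, hi⟩
      rw [hcfun]
      simp only [dif_pos hex]
      exact hex.choose_spec
    have hclose : ∀ (i : Fin p) (v w : EuclideanSpace ℝ (Fin d)),
        v ∈ parts i → w ∈ parts i → dist v w ≤ ρ := by
      intro i v w hv hw
      have hb : Bornology.IsBounded (parts i) :=
        Metric.isBounded_closedBall.subset (hsubB i)
      exact le_trans (Metric.dist_le_diam_of_mem hb hv hw) (hdiam i)
    -- out-clique property
    have hcliq : ∀ x y z : EuclideanSpace ℝ (Fin d),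
        dist x y ≤ ρ → dist x z ≤ ρ → f x < f y → f x < f z →
        cfun x y = cfun x z → dist y z ≤ ρ := by
      intro x y z hdy hdz hly hlz hc
      have h1 := hcmem x y hdy (by rw [inner_sub_right]; simpa [hf_def] using sub_pos.2 hly)
      have h2 := hcmem x z hdz (by rw [inner_sub_right]; simpa [hf_def] using sub_pos.2 hlz)
      rw [hc] at h1
      have := hclose _ _ _ h1 h2
      rw [LinearIsometryEquiv.dist_map] at this
      rwa [dist_sub_right] at this
    have hcliq' : ∀ x y z : EuclideanSpace ℝ (Fin d),
        dist x y ≤ ρ → dist x z ≤ ρ → f y < f x → f z < f x →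
        cfun y x = cfun z x → dist y z ≤ ρ := by
      intro x y z hdy hdz hly hlz hc
      have h1 := hcmem y x (by rwa [dist_comm]) (by rw [inner_sub_right]; simpa [hf_def] using sub_pos.2 hly)
      have h2 := hcmem z x (by rwa [dist_comm]) (by rw [inner_sub_right]; simpa [hf_def] using sub_pos.2 hlz)
      rw [hc] at h1
      have := hclose _ _ _ h1 h2
      rw [LinearIsometryEquiv.dist_map] at this
      rwa [dist_sub_left] at this
    have hsym : ∀ x y : EuclideanSpace ℝ (Fin d),
        (y ≠ x ∧ dist x y ≤ ρ) → (x ≠ y ∧ dist y x ≤ ρ) := by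
      rintro x y ⟨h1, h2⟩
      exact ⟨h1.symm, by rwa [dist_comm]⟩
    have hcliqA : ∀ x y z : EuclideanSpace ℝ (Fin d),
        (y ≠ x ∧ dist x y ≤ ρ) → (z ≠ x ∧ dist x z ≤ ρ) → f x < f y → f x < f z →
        cfun x y = cfun x z → f y < f z → (z ≠ y ∧ dist y z ≤ ρ) := by
      intro x y z hxy hxz l1 l2 hc hlt
      refine ⟨?_, hcliq x y z hxy.2 hxz.2 l1 l2 hc⟩
      intro h
      rw [h] at hlt
      exact lt_irrefl _ hlt
    have hcliqA' : ∀ x y z : EuclideanSpace ℝ (Fin d),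
        (y ≠ x ∧ dist x y ≤ ρ) → (z ≠ x ∧ dist x z ≤ ρ) → f y < f x → f z < f x →
        cfun y x = cfun z x → f y < f z → (z ≠ y ∧ dist y z ≤ ρ) := by
      intro x y z hxy hxz l1 l2 hc hlt
      refine ⟨?_, hcliq' x y z hxy.2 hxz.2 l1 l2 hc⟩
      intro h
      rw [h] at hlt
      exact lt_irrefl _ hlt
    refine le_trans (le_of_eq (Finset.sum_congr rfl fun x _ => ?_))
      (abstract_main ξ (fun a b => b ≠ a ∧ dist a b ≤ ρ) hsym (fun x y h => h.1) f hf p hp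
        cfun hcliqA hcliqA' (diskN ρ ξ) ?_)
    · rw [diskDeg]
      exact congrArg (fun n : ℕ => (n : ℝ) ^ 2) (congrArg Finset.card (filter_inst_eq _ _ _ _))
    · rw [diskN]
      apply Finset.card_le_card_of_injOn (fun q => ({q.1, q.2} : Finset _))
      · rintro ⟨a, b⟩ hq
        simp only [Finset.mem_coe, Finset.mem_filter, Finset.mem_product] at hq
        obtain ⟨⟨ha, hb⟩, ⟨hne, hdist⟩, hlt⟩ := hq
        rw [Finset.mem_coe, Finset.mem_filter, Finset.mem_powersetCard]
        refine ⟨⟨?_, Finset.card_pair (Ne.symm hne)⟩, ?_⟩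
        · intro w hw
          rcases Finset.mem_insert.1 hw with rfl | hw
          · exact ha
          · rw [Finset.mem_singleton.1 hw]; exact hb
        · intro w hw w' hw' hne'
          rcases Finset.mem_insert.1 hw with rfl | hw1 <;>
            rcases Finset.mem_insert.1 hw' with rfl | hw2
          · exact absurd rfl hne'
          · rw [Finset.mem_singleton.1 hw2]; exact hdist
          · rw [Finset.mem_singleton.1 hw1]; rwa [dist_comm]
          · rw [Finset.mem_singleton.1 hw1, Finset.mem_singleton.1 hw2] at hne'
            exact absurd rfl hne'
      · rintro ⟨a, b⟩ hab ⟨a', b'⟩ hab' h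
        simp only [Finset.mem_coe, Finset.mem_filter, Finset.mem_product] at hab hab'
        have hset : ({a, b} : Set (EuclideanSpace ℝ (Fin d))) = {a', b'} := by
          have h2 := congrArg (fun (s : Finset (EuclideanSpace ℝ (Fin d))) => (s : Set (EuclideanSpace ℝ (Fin d)))) h
          simpa using h2
        rcases Set.pair_eq_pair_iff.1 hset with ⟨e1', e2'⟩ | ⟨e1', e2'⟩
        · simp [Prod.ext_iff, e1', e2']
        · exfalso
          have l1 : f a < f b := hab.2.2
          have l2 : f a' < f b' := hab'.2.2
          rw [← e1', ← e2'] at l2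
          exact lt_irrefl _ (l1.trans l2)
  · -- second inequality
    have hN0 : (0:ℝ) ≤ (diskN ρ ξ : ℝ) := Nat.cast_nonneg _
    have hNle : (diskN ρ ξ : ℝ) ≤ (diskN ρ ξ : ℝ) ^ ((3:ℝ)/2) := by
      rcases Nat.eq_zero_or_pos (diskN ρ ξ) with h | h
      · rw [h]
        norm_num
      · have h1 : (1:ℝ) ≤ (diskN ρ ξ : ℝ) := by exact_mod_cast h
        calc (diskN ρ ξ : ℝ) = (diskN ρ ξ : ℝ) ^ (1:ℝ) := (Real.rpow_one _).symm
          _ ≤ (diskN ρ ξ : ℝ) ^ ((3:ℝ)/2) :=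
              Real.rpow_le_rpow_of_exponent_le h1 (by norm_num)
    have hp0 : (0:ℝ) ≤ (p : ℝ) := Nat.cast_nonneg _
    have := mul_le_mul_of_nonneg_left hNle (by positivity : (0:ℝ) ≤ 4 * (p:ℝ))
    nlinarith [this]
end

section
/- Let d ≥ 1, ρ > 0 and p ≥ 1 be such that the half ball B = {z ∈ ℝ^d : ‖z‖ ≤ ρ and z₁ >):0} can be written as a disjoint union of p sets each of diameter at most ρ, and set D = (4√2/3)·p + √(32·p²/9 + 4·p − 1). Then for every finite set ξ ⊂ ℝ^d, Σ_{x ∈ ξ} deg(x)² ≤ (8√2/3 + 4/D)·p·N_ξ^{3/2}. -/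
set_option maxHeartbeats 1000000

open scoped Classical

private lemma aux_sq_choose (n : ℕ) : n ^ 2 = 2 * n.choose 2 + n := by
  induction n with
  | zero => rfl
  | succ m ih =>
    rw [Nat.choose_succ_succ, Nat.choose_one_right]
    ring_nf
    ring_nf at ih
    omega

private lemma aux_generic {E : Type*} [NormedAddCommGroup E] [InnerProductSpace ℝ E]
    (W : Finset E) : ∃ u : E, ∀ w ∈ W, w ≠ 0 → (inner ℝ u w : ℝ) ≠ 0 := by
  classical
  induction W using Finset.induction_on with
  | empty => exact ⟨0, by simp⟩
  | insert a W' ha ih =>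
    obtain ⟨u, hu⟩ := ih
    set bad : Finset ℝ := (insert a W').image (fun w => -(inner ℝ u w : ℝ) / (inner ℝ a w : ℝ)) with hbad
    obtain ⟨t, ht⟩ := Infinite.exists_notMem_finset bad
    refine ⟨u + t • a, ?_⟩
    intro w hw hw0
    rw [inner_add_left, real_inner_smul_left]
    intro heq
    by_cases hiaw : (inner ℝ a w : ℝ) = 0
    · rw [hiaw, mul_zero, add_zero] at heq
      rcases Finset.mem_insert.mp hw with rfl | hwW'
      · exact hw0 (inner_self_eq_zero.mp hiaw)
      · exact hu w hwW' hw0 heq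
    · apply ht
      rw [hbad]
      refine Finset.mem_image.mpr ⟨w, hw, ?_⟩
      field_simp
      linarith [heq]

private lemma aux_edges_through {d : ℕ} (ρ : ℝ) (ξ : Finset (EuclideanSpace ℝ (Fin d)))
    (x : EuclideanSpace ℝ (Fin d)) (hx : x ∈ ξ) :
    (((ξ.powersetCard 2).filter fun e => ∀ a ∈ e, ∀ b ∈ e, a ≠ b → dist a b ≤ ρ).filter
      (fun e => x ∈ e)).card = diskDeg ρ ξ x := by
  classical
  rw [diskDeg]
  symm
  apply Finset.card_bij (i := fun y _ => ({x, y} : Finset _))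
  · -- maps to
    intro y hy
    simp only [Finset.mem_filter] at hy ⊢
    obtain ⟨hyξ, hyx, hdxy⟩ := hy
    refine ⟨⟨?_, ?_⟩, by simp⟩
    · rw [Finset.mem_powersetCard]
      constructor
      · intro a ha
        rcases Finset.mem_insert.mp ha with rfl | ha
        · exact hx
        · rw [Finset.mem_singleton.mp ha]; exact hyξ
      · rw [Finset.card_pair (Ne.symm hyx)]
    · intro a ha b hb hab
      simp only [Finset.mem_insert, Finset.mem_singleton] at ha hb
      rcases ha with rfl | rfl <;> rcases hb with rfl | rfl
      · exact absurd rfl hab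
      · exact hdxy
      · rw [dist_comm]; exact hdxy
      · exact absurd rfl hab
  · -- injective
    intro y₁ hy₁ y₂ hy₂ h
    simp only [Finset.mem_filter] at hy₁ hy₂
    have : y₁ ∈ ({x, y₂} : Finset _) := h ▸ (by simp)
    rcases Finset.mem_insert.mp this with rfl | h'
    · exact absurd rfl hy₁.2.1
    · exact Finset.mem_singleton.mp h'
  · -- surjective
    intro e he
    simp only [Finset.mem_filter, Finset.mem_powersetCard] at he
    obtain ⟨⟨⟨heξ, hecard⟩, hdist⟩, hxe⟩ := he
    obtain ⟨a, b, hab, rfl⟩ := Finset.card_eq_two.mp hecard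
    simp only [Finset.mem_insert, Finset.mem_singleton] at hxe
    rcases hxe with rfl | rfl
    · refine ⟨b, ?_, rfl⟩
      simp only [Finset.mem_filter]
      exact ⟨heξ (by simp), fun h => hab h.symm,
        hdist x (by simp) b (by simp) hab⟩
    · refine ⟨a, ?_, ?_⟩
      · simp only [Finset.mem_filter]
        exact ⟨heξ (by simp), hab, hdist x (by simp) a (by simp) hab.symm⟩
      · rw [Finset.pair_comm]

private lemma aux_handshake {d : ℕ} (ρ : ℝ) (ξ : Finset (EuclideanSpace ℝ (Fin d))) :
    ∑ x ∈ ξ, diskDeg ρ ξ x = 2 * diskN ρ ξ := by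
  classical
  set Ef := ((ξ.powersetCard 2).filter fun e => ∀ a ∈ e, ∀ b ∈ e, a ≠ b → dist a b ≤ ρ) with hEf
  have h1 : ∀ x ∈ ξ, diskDeg ρ ξ x = (Ef.filter (fun e => x ∈ e)).card := by
    intro x hx; exact (aux_edges_through ρ ξ x hx).symm
  rw [Finset.sum_congr rfl h1]
  have h2 : ∀ x, (Ef.filter (fun e => x ∈ e)).card = ∑ e ∈ Ef, if x ∈ e then 1 else 0 := by
    intro x; rw [Finset.card_filter]
  simp_rw [h2]
  rw [Finset.sum_comm]
  have h3 : ∀ e ∈ Ef, (∑ x ∈ ξ, if x ∈ e then 1 else 0) = 2 := by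
    intro e he
    rw [← Finset.card_filter]
    have hsub : e ⊆ ξ := (Finset.mem_powersetCard.mp (Finset.mem_filter.mp he).1).1
    have hcard : e.card = 2 := (Finset.mem_powersetCard.mp (Finset.mem_filter.mp he).1).2
    rw [Finset.filter_mem_eq_inter, Finset.inter_eq_right.mpr hsub, hcard]
  rw [Finset.sum_congr rfl h3, Finset.sum_const, smul_eq_mul, mul_comm]
  rfl

private lemma aux_numeric (p : ℕ) (hp : 1 ≤ p) (D : ℝ)
    (hD : D = 4 * Real.sqrt 2 / 3 * p
        + Real.sqrt (32 / 9 * (p : ℝ) ^ 2 + 4 * (p : ℝ) - 1)) :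
    4 * Real.sqrt p ≤ (8 * Real.sqrt 2 / 3 + 4 / D) * p := by
  have hp1 : (1 : ℝ) ≤ p := by exact_mod_cast hp
  have hs2 : Real.sqrt 2 ^ 2 = 2 := Real.sq_sqrt (by norm_num)
  have hs2n : 0 ≤ Real.sqrt 2 := Real.sqrt_nonneg 2
  have hs2lb : 1.4 ≤ Real.sqrt 2 := by nlinarith
  have hs2ub : Real.sqrt 2 ≤ 1.5 := by nlinarith
  have harg : (0 : ℝ) ≤ 32 / 9 * (p : ℝ) ^ 2 + 4 * (p : ℝ) - 1 := by nlinarith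
  have hB : Real.sqrt (32 / 9 * (p : ℝ) ^ 2 + 4 * (p : ℝ) - 1) ^ 2
      = 32 / 9 * (p : ℝ) ^ 2 + 4 * (p : ℝ) - 1 := Real.sq_sqrt harg
  have hBn : 0 ≤ Real.sqrt (32 / 9 * (p : ℝ) ^ 2 + 4 * (p : ℝ) - 1) := Real.sqrt_nonneg _
  have hDpos : 0 < D := by rw [hD]; nlinarith
  have hspn : 0 ≤ Real.sqrt p := Real.sqrt_nonneg p
  have hsp : Real.sqrt p ^ 2 = p := Real.sq_sqrt (by positivity)
  rcases eq_or_lt_of_le hp1 with hp1' | hp2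
  · -- p = 1
    have hpe : (p : ℝ) = 1 := hp1'.symm
    have hsp1 : Real.sqrt p = 1 := by rw [show ((p : ℝ)) = 1 from hpe, Real.sqrt_one]
    have hBub : Real.sqrt (32 / 9 * (p : ℝ) ^ 2 + 4 * (p : ℝ) - 1) ≤ 2.6 := by
      nlinarith [hB, hBn]
    have hDub : D ≤ 4.6 := by rw [hD, hpe] at *; nlinarith
    have key : (4 - 8 * Real.sqrt 2 / 3) * D ≤ 4 := by nlinarith
    have h4D : 4 - 8 * Real.sqrt 2 / 3 ≤ 4 / D := by
      rw [le_div_iff₀ hDpos]; linarith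
    rw [hpe, Real.sqrt_one]
    linarith
  · -- 2 ≤ p
    have hp2' : (2 : ℝ) ≤ p := by
      have : 2 ≤ p := by
        by_contra h
        push_neg at h
        interval_cases p
        · simp at hp2
      exact_mod_cast this
    have h1 : Real.sqrt 2 * Real.sqrt p ≤ 4 * p / 3 := by
      rw [← Real.sqrt_mul (by norm_num)]
      rw [show (4 * (p : ℝ) / 3) = Real.sqrt ((4 * (p : ℝ) / 3) ^ 2) from
        (Real.sqrt_sq (by positivity)).symm]
      apply Real.sqrt_le_sqrt
      nlinarith
    have h2 : Real.sqrt 2 * (Real.sqrt 2 * Real.sqrt p) ≤ Real.sqrt 2 * (4 * p / 3) :=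
      mul_le_mul_of_nonneg_left h1 hs2n
    have h2' : Real.sqrt 2 * (Real.sqrt 2 * Real.sqrt p) = 2 * Real.sqrt p := by
      rw [← mul_assoc, ← sq, hs2]
    have h4D : 0 ≤ 4 / D * p := by positivity
    have hring : (8 * Real.sqrt 2 / 3 + 4 / D) * p = 8 * Real.sqrt 2 / 3 * p + 4 / D * p := by
      ring
    rw [hring]
    linarith

private lemma aux_degbound {d : ℕ} (hd : 0 < d) {p : ℕ} (hp : 1 ≤ p) {ρ : ℝ}
    (parts : Fin p → Set (EuclideanSpace ℝ (Fin d)))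
    (hunion : (⋃ i, parts i) = {z : EuclideanSpace ℝ (Fin d) | ‖z‖ ≤ ρ ∧ 0 < z ⟨0, hd⟩})
    (hdiam : ∀ i, Metric.diam (parts i) ≤ ρ)
    (ξ : Finset (EuclideanSpace ℝ (Fin d))) (x : EuclideanSpace ℝ (Fin d)) (hx : x ∈ ξ) :
    (diskDeg ρ ξ x) ^ 2 ≤ 4 * p * diskN ρ ξ := by
  classical
  set s : Finset (EuclideanSpace ℝ (Fin d)) := ξ.filter (fun y => y ≠ x ∧ dist x y ≤ ρ) with hs
  have hdeg : diskDeg ρ ξ x = s.card := rfl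
  rcases s.eq_empty_or_nonempty with hse | ⟨y0, hy0⟩
  · rw [hdeg, hse]; simp
  -- parts are bounded
  have hbParts : ∀ i, Bornology.IsBounded (parts i) := by
    intro i
    apply (Metric.isBounded_closedBall (x := (0 : EuclideanSpace ℝ (Fin d))) (r := ρ)).subset
    intro z hz
    have hz' : z ∈ ⋃ j, parts j := Set.mem_iUnion.mpr ⟨i, hz⟩
    rw [hunion] at hz'
    exact Metric.mem_closedBall.mpr (by simpa [dist_zero_right] using hz'.1)
  -- generic direction
  obtain ⟨u, hu⟩ := aux_generic (s.image (fun y => y - x))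
  have hinner : ∀ y ∈ s, (inner ℝ u (y - x) : ℝ) ≠ 0 := by
    intro y hy
    apply hu _ (Finset.mem_image_of_mem _ hy)
    exact sub_ne_zero.mpr (Finset.mem_filter.mp hy).2.1
  have hune : u ≠ 0 := by
    intro h
    exact hinner y0 hy0 (by rw [h, inner_zero_left])
  set u' : EuclideanSpace ℝ (Fin d) := (‖u‖ : ℝ)⁻¹ • u with hu'def
  have hu'norm : ‖u'‖ = 1 := norm_smul_inv_norm hune
  have hinner' : ∀ y ∈ s, (inner ℝ u' (y - x) : ℝ) ≠ 0 := by
    intro y hy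
    rw [hu'def, real_inner_smul_left]
    exact mul_ne_zero (inv_ne_zero (norm_ne_zero_iff.mpr hune)) (hinner y hy)
  set i0 : Fin d := ⟨0, hd⟩
  set e1 : EuclideanSpace ℝ (Fin d) := EuclideanSpace.single i0 (1 : ℝ) with he1def
  have he1 : ‖e1‖ = 1 := by rw [he1def, EuclideanSpace.norm_single]; norm_num
  set T := Submodule.reflection (ℝ ∙ (u' - e1))ᗮ with hT
  have hTu' : T u' = e1 := Submodule.reflection_sub (by rw [hu'norm, he1])
  have hhalf : ∀ w : EuclideanSpace ℝ (Fin d), ‖w‖ ≤ ρ → 0 < (inner ℝ u' w : ℝ) → ∃ i, T w ∈ parts i := by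
    intro w hwn hwp
    have h1 : ‖T w‖ ≤ ρ := by rw [T.norm_map]; exact hwn
    have h2 : 0 < (T w) i0 := by
      have heq : (inner ℝ e1 (T w) : ℝ) = (T w) i0 := by
        rw [he1def, EuclideanSpace.inner_single_left]; simp
      rw [← heq, ← hTu', LinearIsometryEquiv.inner_map_map]
      exact hwp
    have hmem : T w ∈ ⋃ i, parts i := by rw [hunion]; exact ⟨h1, h2⟩
    exact Set.mem_iUnion.mp hmem
  set pidx : EuclideanSpace ℝ (Fin d) → Fin p := fun w => if h : ∃ i, w ∈ parts i then h.choose else ⟨0, hp⟩ with hpidx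
  have hpidx_spec : ∀ w : EuclideanSpace ℝ (Fin d), (∃ i, w ∈ parts i) → w ∈ parts (pidx w) := by
    intro w h
    rw [hpidx]
    simp only [dif_pos h]
    exact h.choose_spec
  set g : EuclideanSpace ℝ (Fin d) → Fin p × Bool := fun y =>
    if 0 < (inner ℝ u' (y - x) : ℝ) then (pidx (T (y - x)), true) else (pidx (T (x - y)), false)
    with hg
  -- clique property
  have hclique : ∀ y ∈ s, ∀ z ∈ s, g y = g z → dist y z ≤ ρ := by
    intro y hy z hz hgyz
    obtain ⟨hyξ, hyx, hdy⟩ := Finset.mem_filter.mp hy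
    obtain ⟨hzξ, hzx, hdz⟩ := Finset.mem_filter.mp hz
    have hyn : ‖y - x‖ ≤ ρ := by rw [← dist_eq_norm, dist_comm]; exact hdy
    have hzn : ‖z - x‖ ≤ ρ := by rw [← dist_eq_norm, dist_comm]; exact hdz
    have hyn' : ‖x - y‖ ≤ ρ := by rw [← dist_eq_norm]; exact hdy
    have hzn' : ‖x - z‖ ≤ ρ := by rw [← dist_eq_norm]; exact hdz
    by_cases hsy : 0 < (inner ℝ u' (y - x) : ℝ)
    · have hsz : 0 < (inner ℝ u' (z - x) : ℝ) := by
        by_contra hc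
        rw [hg] at hgyz
        simp only [if_pos hsy, if_neg hc, Prod.mk.injEq] at hgyz
        exact Bool.true_eq_false.mp hgyz.2
      obtain ⟨i, hi⟩ := hhalf _ hyn hsy
      obtain ⟨j, hj⟩ := hhalf _ hzn hsz
      have hidx : pidx (T (y - x)) = pidx (T (z - x)) := by
        rw [hg] at hgyz
        simp only [if_pos hsy, if_pos hsz, Prod.mk.injEq] at hgyz
        exact hgyz.1
      have hmy : T (y - x) ∈ parts (pidx (T (y - x))) := hpidx_spec _ ⟨i, hi⟩
      have hmz : T (z - x) ∈ parts (pidx (T (y - x))) := hidx ▸ hpidx_spec _ ⟨j, hj⟩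
      calc dist y z = dist (T (y - x)) (T (z - x)) := by
              rw [T.dist_map, dist_sub_right]
        _ ≤ Metric.diam (parts (pidx (T (y - x)))) :=
              Metric.dist_le_diam_of_mem (hbParts _) hmy hmz
        _ ≤ ρ := hdiam _
    · have hsy' : 0 < (inner ℝ u' (x - y) : ℝ) := by
        have hne := hinner' y hy
        have hlt : (inner ℝ u' (y - x) : ℝ) < 0 := lt_of_le_of_ne (not_lt.mp hsy) hne
        have hxy : x - y = -(y - x) := by abel
        rw [hxy, inner_neg_right]
        linarith
      have hsz : ¬ 0 < (inner ℝ u' (z - x) : ℝ) := by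
        by_contra hc
        rw [hg] at hgyz
        simp only [if_neg hsy, if_pos hc, Prod.mk.injEq] at hgyz
        exact Bool.false_eq_true.mp hgyz.2
      have hsz' : 0 < (inner ℝ u' (x - z) : ℝ) := by
        have hne := hinner' z hz
        have hlt : (inner ℝ u' (z - x) : ℝ) < 0 := lt_of_le_of_ne (not_lt.mp hsz) hne
        have hxz : x - z = -(z - x) := by abel
        rw [hxz, inner_neg_right]
        linarith
      obtain ⟨i, hi⟩ := hhalf _ hyn' hsy'
      obtain ⟨j, hj⟩ := hhalf _ hzn' hsz'
      have hidx : pidx (T (x - y)) = pidx (T (x - z)) := by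
        rw [hg] at hgyz
        simp only [if_neg hsy, if_neg hsz, Prod.mk.injEq] at hgyz
        exact hgyz.1
      have hmy : T (x - y) ∈ parts (pidx (T (x - y))) := hpidx_spec _ ⟨i, hi⟩
      have hmz : T (x - z) ∈ parts (pidx (T (x - y))) := hidx ▸ hpidx_spec _ ⟨j, hj⟩
      calc dist y z = dist (T (x - y)) (T (x - z)) := by
              rw [T.dist_map, dist_sub_left]
        _ ≤ Metric.diam (parts (pidx (T (x - y)))) :=
              Metric.dist_le_diam_of_mem (hbParts _) hmy hmz
        _ ≤ ρ := hdiam _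
  -- counting
  set k := s.card with hk
  have hksum : k = ∑ j : Fin p × Bool, (s.filter (fun y => g y = j)).card :=
    Finset.card_eq_sum_card_fiberwise (fun y _ => Finset.mem_univ _)
  set P := ((s.powersetCard 2).filter fun e => ∀ a ∈ e, ∀ b ∈ e, a ≠ b → dist a b ≤ ρ) with hP
  have hfibsum : ∑ j : Fin p × Bool, ((s.filter (fun y => g y = j)).powersetCard 2).card
      ≤ P.card := by
    rw [← Finset.card_biUnion]
    · apply Finset.card_le_card
      intro e he
      obtain ⟨j, _, hej⟩ := Finset.mem_biUnion.mp he
      obtain ⟨hesub, hecard⟩ := Finset.mem_powersetCard.mp hej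
      refine Finset.mem_filter.mpr ⟨Finset.mem_powersetCard.mpr
        ⟨fun a ha => (Finset.mem_filter.mp (hesub ha)).1, hecard⟩, ?_⟩
      intro a ha b hb hab
      have ha' := Finset.mem_filter.mp (hesub ha)
      have hb' := Finset.mem_filter.mp (hesub hb)
      exact hclique a ha'.1 b hb'.1 (ha'.2.trans hb'.2.symm)
    · intro j1 _ j2 _ hj
      rw [Function.onFun, Finset.disjoint_left]
      intro e he1 he2
      obtain ⟨h1s, h1c⟩ := Finset.mem_powersetCard.mp he1
      obtain ⟨h2s, _⟩ := Finset.mem_powersetCard.mp he2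
      obtain ⟨a, ha⟩ := Finset.card_pos.mp (by rw [h1c]; norm_num)
      exact hj ((Finset.mem_filter.mp (h1s ha)).2.symm.trans (Finset.mem_filter.mp (h2s ha)).2)
  set Ef := ((ξ.powersetCard 2).filter fun e => ∀ a ∈ e, ∀ b ∈ e, a ≠ b → dist a b ≤ ρ) with hEf
  have hN : diskN ρ ξ = Ef.card := rfl
  have hsplit : (Ef.filter (fun e => x ∈ e)).card + (Ef.filter (fun e => ¬ x ∈ e)).card
      = Ef.card := Finset.card_filter_add_card_filter_not _
  have hthrough : (Ef.filter (fun e => x ∈ e)).card = k := aux_edges_through ρ ξ x hx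
  have hPB : P ⊆ Ef.filter (fun e => ¬ x ∈ e) := by
    intro e he
    obtain ⟨he2, hed⟩ := Finset.mem_filter.mp he
    obtain ⟨hesub, hecard⟩ := Finset.mem_powersetCard.mp he2
    refine Finset.mem_filter.mpr ⟨Finset.mem_filter.mpr ⟨Finset.mem_powersetCard.mpr
      ⟨fun a ha => (Finset.mem_filter.mp (hesub ha)).1, hecard⟩, hed⟩, ?_⟩
    intro hxe
    exact (Finset.mem_filter.mp (hesub hxe)).2.1 rfl
  have hPk : P.card + k ≤ diskN ρ ξ := by
    have h1 := Finset.card_le_card hPB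
    rw [hN, ← hsplit, hthrough]
    omega
  -- Cauchy-Schwarz in ℕ
  have hCS : k ^ 2 ≤ 2 * p * ∑ j : Fin p × Bool, (s.filter (fun y => g y = j)).card ^ 2 := by
    have h := sq_sum_le_card_mul_sum_sq (s := (Finset.univ : Finset (Fin p × Bool)))
      (f := fun j => (s.filter (fun y => g y = j)).card)
    rw [Finset.card_univ] at h
    have hcard : Fintype.card (Fin p × Bool) = 2 * p := by
      simp [Fintype.card_prod]
      ring
    rw [hcard] at h
    calc k ^ 2 = (∑ j : Fin p × Bool, (s.filter (fun y => g y = j)).card) ^ 2 := by rw [← hksum]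
      _ ≤ 2 * p * ∑ j : Fin p × Bool, (s.filter (fun y => g y = j)).card ^ 2 := h
  have hsum2 : ∑ j : Fin p × Bool, (s.filter (fun y => g y = j)).card ^ 2
      ≤ 2 * P.card + k := by
    have h1 : ∀ j : Fin p × Bool, (s.filter (fun y => g y = j)).card ^ 2
        = 2 * ((s.filter (fun y => g y = j)).powersetCard 2).card
            + (s.filter (fun y => g y = j)).card := by
      intro j
      rw [Finset.card_powersetCard]
      exact aux_sq_choose _
    rw [Finset.sum_congr rfl (fun j _ => h1 j), Finset.sum_add_distrib, ← Finset.mul_sum,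
      ← hksum]
    omega
  calc k ^ 2 ≤ 2 * p * (2 * P.card + k) := le_trans hCS (Nat.mul_le_mul_left _ hsum2)
    _ ≤ 2 * p * (2 * diskN ρ ξ) := by
        apply Nat.mul_le_mul_left
        omega
    _ = 4 * p * diskN ρ ξ := by ring

/-- Theorem 6.4 (i): if the half ball `B = {z : ‖z‖ ≤ ρ, z₁ > 0}` can be partitioned
into `p` sets of diameter at most `ρ`, and
`D = (4√2/3)·p + √(32·p²/9 + 4·p − 1)`, then
`Σ_{x∈ξ} deg(x)² ≤ (8√2/3 + 4/D)·p·N_ξ^(3/2)`. -/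
theorem sum_sq_degrees_refined_bound (d : ℕ) (hd : 0 < d) (ρ : ℝ) (hρ : 0 < ρ)
    (p : ℕ) (hp : 1 ≤ p)
    (parts : Fin p → Set (EuclideanSpace ℝ (Fin d)))
    (hdisj : Pairwise (Function.onFun Disjoint parts))
    (hunion : (⋃ i, parts i) =
      {z : EuclideanSpace ℝ (Fin d) | ‖z‖ ≤ ρ ∧ 0 < z ⟨0, hd⟩})
    (hdiam : ∀ i, Metric.diam (parts i) ≤ ρ)
    (D : ℝ)
    (hD : D = 4 * Real.sqrt 2 / 3 * p
        + Real.sqrt (32 / 9 * (p : ℝ) ^ 2 + 4 * (p : ℝ) - 1))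
    (ξ : Finset (EuclideanSpace ℝ (Fin d))) :
    ∑ x ∈ ξ, (diskDeg ρ ξ x : ℝ) ^ 2 ≤
      (8 * Real.sqrt 2 / 3 + 4 / D) * p * (diskN ρ ξ : ℝ) ^ ((3 : ℝ) / 2) := by
  classical
  set n := diskN ρ ξ with hn
  have hdegb : ∀ x ∈ ξ, (diskDeg ρ ξ x : ℝ) ≤ Real.sqrt (4 * p * n) := by
    intro x hx
    rw [Real.le_sqrt (by positivity) (by positivity)]
    exact_mod_cast aux_degbound hd hp parts hunion hdiam ξ x hx
  have hhs : ∑ x ∈ ξ, (diskDeg ρ ξ x : ℝ) = 2 * n := by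
    have h := aux_handshake ρ ξ
    exact_mod_cast congrArg (Nat.cast : ℕ → ℝ) h
  have step1 : ∑ x ∈ ξ, (diskDeg ρ ξ x : ℝ) ^ 2 ≤ Real.sqrt (4 * p * n) * (2 * n) := by
    calc ∑ x ∈ ξ, (diskDeg ρ ξ x : ℝ) ^ 2
        ≤ ∑ x ∈ ξ, Real.sqrt (4 * p * n) * (diskDeg ρ ξ x : ℝ) := by
          apply Finset.sum_le_sum
          intro x hx
          rw [sq]
          exact mul_le_mul_of_nonneg_right (hdegb x hx) (by positivity)
      _ = Real.sqrt (4 * p * n) * (2 * n) := by rw [← Finset.mul_sum, hhs]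
  have hsqrt4 : Real.sqrt (4 * p * n) = 2 * Real.sqrt p * Real.sqrt n := by
    rw [show (4 * (p : ℝ) * (n : ℝ)) = (4 : ℝ) * ((p : ℝ) * (n : ℝ)) by ring,
      Real.sqrt_mul (by norm_num), Real.sqrt_mul (by positivity),
      show Real.sqrt 4 = 2 by
        rw [show (4 : ℝ) = 2 ^ 2 by norm_num, Real.sqrt_sq (by norm_num)]]
    ring
  have hrpow : (n : ℝ) ^ ((3 : ℝ) / 2) = n * Real.sqrt n := by
    rw [show (3 : ℝ) / 2 = 1 + 1 / 2 by norm_num,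
      Real.rpow_add' (by positivity) (by norm_num), Real.rpow_one, ← Real.sqrt_eq_rpow]
  have hnum := aux_numeric p hp D hD
  calc ∑ x ∈ ξ, (diskDeg ρ ξ x : ℝ) ^ 2 ≤ Real.sqrt (4 * p * n) * (2 * n) := step1
    _ = (4 * Real.sqrt p) * ((n : ℝ) * Real.sqrt n) := by rw [hsqrt4]; ring
    _ ≤ ((8 * Real.sqrt 2 / 3 + 4 / D) * p) * ((n : ℝ) * Real.sqrt n) := by
        apply mul_le_mul_of_nonneg_right hnum (by positivity)
    _ = (8 * Real.sqrt 2 / 3 + 4 / D) * p * (n : ℝ) ^ ((3 : ℝ) / 2) := by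
        rw [hrpow]
end

section
/- For every finite simple graph with N edges, the sum over all vertices v of deg(v)² is at most N² + N; that is, among all graphs with N edges the star (one vertex of degree N, all other non-isolated vertices of degree 1) maximises the sum of squared degrees. -/
open Finset

lemma deg_add_deg_le {V : Type*} [Fintype V] [DecidableEq V]
    (G : SimpleGraph V) [DecidableRel G.Adj] {u v : V} (h : G.Adj u v) :
    G.degree u + G.degree v ≤ G.edgeFinset.card + 1 := by
  rw [← G.card_incidenceFinset_eq_degree u, ← G.card_incidenceFinset_eq_degree v]
  rw [← Finset.card_union_add_card_inter]
  have h1 : G.incidenceFinset u ∪ G.incidenceFinset v ⊆ G.edgeFinset := by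
    intro e he
    rcases Finset.mem_union.1 he with he | he <;>
      · rw [SimpleGraph.mem_incidenceFinset] at he
        exact SimpleGraph.mem_edgeFinset.2 he.1
  have h2 : G.incidenceFinset u ∩ G.incidenceFinset v = {s(u, v)} := by
    apply Finset.coe_injective
    push_cast
    exact G.incidenceSet_inter_incidenceSet_of_adj h
  rw [h2]
  simpa using Finset.card_le_card h1

/-- For every finite simple graph with `N` edges, the sum of the squared degrees is
at most `N² + N` (the star maximises the sum of squared degrees). -/
theorem sum_sq_degrees_le_star {V : Type*} [Fintype V] [DecidableEq V]
    (G : SimpleGraph V) [DecidableRel G.Adj] :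
    ∑ v, G.degree v ^ 2 ≤ G.edgeFinset.card ^ 2 + G.edgeFinset.card := by
  set N := G.edgeFinset.card with hN
  have key : 2 * ∑ v, G.degree v ^ 2 ≤ 2 * (N ^ 2 + N) := by
    have e1 : ∑ v, G.degree v ^ 2 = ∑ v, ∑ u ∈ G.neighborFinset v, G.degree v := by
      simp [sq, mul_comm]
    have swap : ∑ v, ∑ u ∈ G.neighborFinset v, G.degree u
        = ∑ v, ∑ u ∈ G.neighborFinset v, G.degree v := by
      rw [Finset.sum_sigma', Finset.sum_sigma']
      apply Finset.sum_nbij' (fun p => ⟨p.2, p.1⟩) (fun p => ⟨p.2, p.1⟩) <;>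
        simp [SimpleGraph.adj_comm]
    have e2 : 2 * ∑ v, G.degree v ^ 2
        = ∑ v, ∑ u ∈ G.neighborFinset v, (G.degree u + G.degree v) := by
      simp only [Finset.sum_add_distrib]
      rw [swap, ← e1]; ring
    rw [e2]
    calc ∑ v, ∑ u ∈ G.neighborFinset v, (G.degree u + G.degree v)
        ≤ ∑ v, ∑ u ∈ G.neighborFinset v, (N + 1) := by
          apply Finset.sum_le_sum; intro v _
          apply Finset.sum_le_sum; intro u hu
          exact deg_add_deg_le G ((SimpleGraph.mem_neighborFinset _ _ _).1 hu).symm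
      _ = (∑ v, G.degree v) * (N + 1) := by
          simp [Finset.sum_mul, SimpleGraph.card_neighborFinset_eq_degree]
      _ = 2 * (N ^ 2 + N) := by
          rw [SimpleGraph.sum_degrees_eq_twice_card_edges]; ring
  omega
end

section
/- Let μ be a Borel measure on ℝ^d that is finite on compact sets, and let ρ > 0. If ∫_{ℝ^d} μ(B(x,ρ)) dμ(x) < ∞, then the function x ↦ μ(B(x,ρ)) is bounded on ℝ^d, i.e. sup_{x ∈ ℝ^d} μ(B(x,ρ)) < ∞. -/
open MeasureTheory

/-- If `μ` is a Borel measure on `ℝ^d` that is finite on compact sets and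
`∫ μ(B(x,ρ)) dμ(x) < ∞`, then `x ↦ μ(B(x,ρ))` is bounded on `ℝ^d`. -/
theorem ball_measure_bounded (d : ℕ) (μ : Measure (EuclideanSpace ℝ (Fin d)))
    [IsFiniteMeasureOnCompacts μ] (ρ : ℝ) (hρ : 0 < ρ)
    (h : ∫⁻ x, μ (Metric.closedBall x ρ) ∂μ < ⊤) :
    ⨆ x, μ (Metric.closedBall x ρ) < ⊤ := by
  set I : ENNReal := ∫⁻ x, μ (Metric.closedBall x ρ) ∂μ with hI
  set C : ENNReal := max 1 I with hC
  have hC_lt : C < ⊤ := by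
    simp only [hC, max_lt_iff]
    exact ⟨ENNReal.one_lt_top, h⟩
  -- Uniform bound on balls of radius ρ/2
  have key : ∀ z : EuclideanSpace ℝ (Fin d), μ (Metric.closedBall z (ρ/2)) ≤ C := by
    intro z
    set a := μ (Metric.closedBall z (ρ/2)) with ha
    have hsq : a * a ≤ I := by
      have h1 : ∫⁻ y, (Metric.closedBall z (ρ/2)).indicator (fun _ => a) y ∂μ = a * a := by
        rw [lintegral_indicator_const measurableSet_closedBall a]
      rw [← h1, hI]
      apply lintegral_mono
      intro y
      by_cases hy : y ∈ Metric.closedBall z (ρ/2)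
      · rw [Set.indicator_of_mem hy]
        apply measure_mono
        intro w hw
        simp only [Metric.mem_closedBall] at *
        calc dist w y ≤ dist w z + dist z y := dist_triangle w z y
          _ ≤ ρ/2 + ρ/2 := add_le_add hw (dist_comm z y ▸ hy)
          _ = ρ := by ring
      · rw [Set.indicator_of_notMem hy]; exact zero_le
    by_cases h1 : a ≤ 1
    · exact le_trans h1 (le_max_left _ _)
    · push_neg at h1
      calc a = a * 1 := (mul_one a).symm
        _ ≤ a * a := mul_le_mul_right h1.le a
        _ ≤ I := hsq
        _ ≤ C := le_max_right _ _
  -- Cover the ball of radius ρ by finitely many balls of radius ρ/2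
  obtain ⟨t, ht⟩ := (isCompact_closedBall (0 : EuclideanSpace ℝ (Fin d)) ρ).elim_finite_subcover
    (fun y : EuclideanSpace ℝ (Fin d) => Metric.ball y (ρ/2))
    (fun y => Metric.isOpen_ball)
    (fun z hz => Set.mem_iUnion.2 ⟨z, Metric.mem_ball_self (by linarith)⟩)
  have bound : ∀ x, μ (Metric.closedBall x ρ) ≤ t.card * C := by
    intro x
    have hcov : Metric.closedBall x ρ ⊆ ⋃ y ∈ t, Metric.closedBall (x + y) (ρ/2) := by
      intro z hz
      have hz0 : z - x ∈ Metric.closedBall (0 : EuclideanSpace ℝ (Fin d)) ρ := by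
        simp only [Metric.mem_closedBall, dist_zero_right] at *
        simpa [dist_eq_norm] using hz
      obtain ⟨y, hy⟩ := Set.mem_iUnion₂.1 (ht hz0)
      refine Set.mem_iUnion₂.2 ⟨y, hy.1, ?_⟩
      have := hy.2
      simp only [Metric.mem_ball] at this
      simp only [Metric.mem_closedBall]
      have : dist z (x + y) < ρ/2 := by
        simpa [dist_eq_norm, sub_add_eq_sub_sub] using this
      linarith
    calc μ (Metric.closedBall x ρ) ≤ μ (⋃ y ∈ t, Metric.closedBall (x + y) (ρ/2)) :=
          measure_mono hcov
      _ ≤ ∑ y ∈ t, μ (Metric.closedBall (x + y) (ρ/2)) := measure_biUnion_finset_le t _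
      _ ≤ ∑ _y ∈ t, C := Finset.sum_le_sum fun y _ => key (x + y)
      _ = t.card * C := by rw [Finset.sum_const, nsmul_eq_mul]
  calc ⨆ x, μ (Metric.closedBall x ρ) ≤ t.card * C := iSup_le bound
    _ < ⊤ := ENNReal.mul_lt_top (by simp) hC_lt
end

section
/- Let F be an integrable real random variable and V a nonnegative random variable on a probability space. Let β ∈ ℝ, let λ > 0 be such that E[exp(λF)] < ∞, and let θ > 0 satisfy Φ_β(λ)·θ < 1 and E[exp(λV/θ)] < ∞. Assume that for every u ∈ (0, λ], Ent(exp(uF)) ≤ u·Φ_β(u)·E[V·exp(uF)]. Then log E[exp(λ(F − E F))] ≤ (Ψ_β(λ)·θ / (1 − Φ_β(λ)·θ)) · log E[exp(λV/θ)]. -/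
set_option maxHeartbeats 1000000

open MeasureTheory

/-- Entropy of a (nonnegative) random variable: `Ent(Z) = E[Z log Z] − E[Z] log E[Z]`. -/
noncomputable def Ent {Ω : Type*} [MeasurableSpace Ω] (P : Measure Ω) (Z : Ω → ℝ) : ℝ :=
  (∫ ω, Z ω * Real.log (Z ω) ∂P) - (∫ ω, Z ω ∂P) * Real.log (∫ ω, Z ω ∂P)

/-- `φ(z) = e^z − z − 1`. -/
noncomputable def phiFn (z : ℝ) : ℝ := Real.exp z - z - 1

/-- `ψ(z) = z·e^z − e^z + 1`. -/
noncomputable def psiFn (z : ℝ) : ℝ := z * Real.exp z - Real.exp z + 1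

/-- `Φ_β(z)`. -/
noncomputable def PhiFn (β z : ℝ) : ℝ :=
  if 0 < β then psiFn (z * β) / (z * β ^ 2)
  else if β = 0 then z / 2
  else phiFn (-(z * β)) / (z * β ^ 2)

/-- `Ψ_β(z)`. -/
noncomputable def PsiFn (β z : ℝ) : ℝ :=
  if 0 < β then phiFn (z * β) / (z * β ^ 2)
  else if β = 0 then z / 2
  else phiFn (-(z * β)) / (z * β ^ 2)

section Helpers

open Real Filter Set

private lemma phi_nonneg (z : ℝ) : 0 ≤ phiFn z := by
  have := Real.add_one_le_exp z; unfold phiFn; linarith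

private lemma psi_nonneg {z : ℝ} (hz : 0 ≤ z) : 0 ≤ psiFn z := by
  have h1 := Real.add_one_le_exp (-z)
  have h2 : Real.exp (-z) * Real.exp z = 1 := by rw [← Real.exp_add]; simp
  have h3 := Real.exp_pos z
  unfold psiFn
  nlinarith [mul_le_mul_of_nonneg_right h1 h3.le]

private lemma hasDerivAt_phi (z : ℝ) : HasDerivAt phiFn (Real.exp z - 1) z := by
  have h := ((Real.hasDerivAt_exp z).sub (hasDerivAt_id z)).sub_const 1
  exact h

private lemma hasDerivAt_psi (z : ℝ) : HasDerivAt psiFn (z * Real.exp z) z := by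
  have h := (((hasDerivAt_id z).mul (Real.hasDerivAt_exp z)).sub (Real.hasDerivAt_exp z)).add_const 1
  simp only [id_eq] at h
  refine h.congr_deriv ?_
  ring

private lemma psi_ge_phi {z : ℝ} (hz : 0 ≤ z) : phiFn z ≤ psiFn z := by
  have key : MonotoneOn (fun z => psiFn z - phiFn z) (Set.Ici (0:ℝ)) := by
    apply monotoneOn_of_deriv_nonneg (convex_Ici 0)
    · intro x _
      exact ((hasDerivAt_psi x).sub (hasDerivAt_phi x)).continuousAt.continuousWithinAt
    · intro x _
      exact ((hasDerivAt_psi x).sub (hasDerivAt_phi x)).differentiableAt.differentiableWithinAt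
    · intro x hx
      rw [HasDerivAt.deriv (f := fun z => psiFn z - phiFn z) ((hasDerivAt_psi x).sub (hasDerivAt_phi x))]
      rw [interior_Ici] at hx
      have h0 : (0:ℝ) ≤ x := le_of_lt hx
      have := psi_nonneg h0
      unfold psiFn at this
      linarith
  have h0 : psiFn 0 - phiFn 0 = 0 := by unfold psiFn phiFn; simp
  have := key (Set.self_mem_Ici) hz hz
  simp only at this
  linarith [this]

private lemma psi_div_mono : MonotoneOn (fun z => psiFn z / z) (Set.Ioi (0:ℝ)) := by
  have hd : ∀ x : ℝ, 0 < x → HasDerivAt (fun z => psiFn z / z)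
      ((x * Real.exp x * x - psiFn x * 1) / x ^ 2) x := by
    intro x hx
    exact (hasDerivAt_psi x).div (hasDerivAt_id x) (ne_of_gt hx)
  apply monotoneOn_of_deriv_nonneg (convex_Ioi 0)
  · intro x hx
    exact (hd x hx).continuousAt.continuousWithinAt
  · rw [interior_Ioi]; intro x hx
    exact (hd x hx).differentiableAt.differentiableWithinAt
  · rw [interior_Ioi]; intro x hx
    rw [(hd x hx).deriv]
    have hx' : (0:ℝ) < x := hx
    have h1 := Real.add_one_le_exp x
    have h2 : (0:ℝ) ≤ x^2 - x + 1 := by nlinarith [sq_nonneg (2*x - 1)]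
    apply div_nonneg _ (sq_nonneg x)
    unfold psiFn
    nlinarith [mul_nonneg (sub_nonneg.2 h1) h2]

private lemma phi_div_mono : MonotoneOn (fun z => phiFn z / z) (Set.Ioi (0:ℝ)) := by
  have hd : ∀ x : ℝ, 0 < x → HasDerivAt (fun z => phiFn z / z)
      (((Real.exp x - 1) * x - phiFn x * 1) / x ^ 2) x := by
    intro x hx
    exact (hasDerivAt_phi x).div (hasDerivAt_id x) (ne_of_gt hx)
  apply monotoneOn_of_deriv_nonneg (convex_Ioi 0)
  · intro x hx
    exact (hd x hx).continuousAt.continuousWithinAt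
  · rw [interior_Ioi]; intro x hx
    exact (hd x hx).differentiableAt.differentiableWithinAt
  · rw [interior_Ioi]; intro x hx
    rw [(hd x hx).deriv]
    apply div_nonneg _ (sq_nonneg x)
    have := psi_nonneg (le_of_lt (show (0:ℝ) < x from hx))
    unfold psiFn at this
    unfold phiFn
    linarith

private lemma PhiFn_nonneg {β u : ℝ} (hu : 0 < u) : 0 ≤ PhiFn β u := by
  unfold PhiFn
  split_ifs with h1 h2
  · exact div_nonneg (psi_nonneg (by positivity)) (by positivity)
  · positivity
  · have hβ : β ≠ 0 := h2
    have h3 : 0 < u * β ^ 2 := by positivity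
    have h4 : (0:ℝ) ≤ -(u * β) := by nlinarith [lt_of_le_of_ne (not_lt.1 h1) h2]
    exact div_nonneg (phi_nonneg _) h3.le

private lemma PhiFn_mono {β x y : ℝ} (hx : 0 < x) (hxy : x ≤ y) : PhiFn β x ≤ PhiFn β y := by
  have hy : 0 < y := lt_of_lt_of_le hx hxy
  unfold PhiFn
  split_ifs with h1 h2
  · have hxβ : 0 < x * β := by positivity
    have hyβ : 0 < y * β := by positivity
    have key := psi_div_mono (Set.mem_Ioi.2 hxβ) (Set.mem_Ioi.2 hyβ)
      (mul_le_mul_of_nonneg_right hxy h1.le)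
    simp only at key
    have e1 : psiFn (x * β) / (x * β ^ 2) = (psiFn (x * β) / (x * β)) / β := by
      rw [div_div]; ring_nf
    have e2 : psiFn (y * β) / (y * β ^ 2) = (psiFn (y * β) / (y * β)) / β := by
      rw [div_div]; ring_nf
    rw [e1, e2]
    gcongr
  · linarith
  · have hβ : β < 0 := lt_of_le_of_ne (not_lt.1 h1) h2
    have hβ' : (0:ℝ) < -β := by linarith
    have hxβ : 0 < x * (-β) := by positivity
    have hyβ : 0 < y * (-β) := by positivity
    have key := phi_div_mono (Set.mem_Ioi.2 hxβ) (Set.mem_Ioi.2 hyβ)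
      (mul_le_mul_of_nonneg_right hxy hβ'.le)
    simp only at key
    have e1 : phiFn (-(x * β)) / (x * β ^ 2) = (phiFn (x * (-β)) / (x * (-β))) / (-β) := by
      rw [show -(x * β) = x * (-β) by ring, div_div]; ring_nf
    have e2 : phiFn (-(y * β)) / (y * β ^ 2) = (phiFn (y * (-β)) / (y * (-β))) / (-β) := by
      rw [show -(y * β) = y * (-β) by ring, div_div]; ring_nf
    rw [e1, e2]
    gcongr

private lemma psiFn_deriv_bound {β : ℝ} {u : ℝ} (hu : 0 < u) :
    ∃ d, HasDerivAt (fun z => PsiFn β z) d u ∧ PhiFn β u / u ≤ d := by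
  rcases lt_trichotomy 0 β with hβ | hβ | hβ
  · refine ⟨psiFn (u * β) / (u ^ 2 * β ^ 2), ?_, ?_⟩
    · have hfun : (fun z => PsiFn β z) = fun z => phiFn (z * β) / (z * β ^ 2) := by
        funext z; simp [PsiFn, hβ]
      rw [hfun]
      have e1 : HasDerivAt (fun z : ℝ => z * β) β u := hasDerivAt_mul_const β
      have h1 : HasDerivAt (fun z : ℝ => phiFn (z * β)) ((Real.exp (u * β) - 1) * β) u :=
        by have := (hasDerivAt_phi (u * β)).comp u e1; exact this
      have h2 : HasDerivAt (fun z : ℝ => z * β ^ 2) (β ^ 2) u := hasDerivAt_mul_const (β ^ 2)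
      have h := h1.div h2 (by positivity)
      refine h.congr_deriv ?_
      unfold psiFn phiFn
      have hu' : u ≠ 0 := ne_of_gt hu
      have hβ' : β ≠ 0 := ne_of_gt hβ
      field_simp
      ring
    · apply le_of_eq
      rw [PhiFn, if_pos hβ]
      rw [div_div]
      ring_nf
  · refine ⟨1/2, ?_, ?_⟩
    · have hfun : (fun z => PsiFn β z) = fun z => z / 2 := by
        funext z; simp [PsiFn, ← hβ]
      rw [hfun]
      simpa using (hasDerivAt_id u).div_const 2
    · apply le_of_eq
      rw [PhiFn, if_neg (by rw [← hβ]; exact lt_irrefl 0), if_pos hβ.symm]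
      field_simp
  · refine ⟨psiFn (-(u * β)) / (u ^ 2 * β ^ 2), ?_, ?_⟩
    · have hfun : (fun z => PsiFn β z) = fun z => phiFn (-(z * β)) / (z * β ^ 2) := by
        funext z; simp only [PsiFn, if_neg (not_lt.2 hβ.le), if_neg (ne_of_lt hβ)]
      rw [hfun]
      have e1 : HasDerivAt (fun z : ℝ => -(z * β)) (-β) u := by
        exact (hasDerivAt_mul_const β).neg
      have h1 : HasDerivAt (fun z : ℝ => phiFn (-(z * β))) ((Real.exp (-(u * β)) - 1) * (-β)) u :=
        by have := (hasDerivAt_phi (-(u * β))).comp u e1; exact this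
      have h2 : HasDerivAt (fun z : ℝ => z * β ^ 2) (β ^ 2) u := hasDerivAt_mul_const (β ^ 2)
      have hβ2 : (0:ℝ) < β ^ 2 := by nlinarith
      have h := h1.div h2 (ne_of_gt (mul_pos hu hβ2))
      refine h.congr_deriv ?_
      unfold psiFn phiFn
      have hu' : u ≠ 0 := ne_of_gt hu
      have hβ' : β ≠ 0 := ne_of_lt hβ
      field_simp
      ring
    · rw [PhiFn, if_neg (not_lt.2 hβ.le), if_neg (ne_of_lt hβ)]
      rw [div_div]
      have hz : (0:ℝ) ≤ -(u * β) := by nlinarith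
      have := psi_ge_phi hz
      have hβ2 : (0:ℝ) < β ^ 2 := by nlinarith
      have h3 : (0:ℝ) < u * β ^ 2 * u := mul_pos (mul_pos hu hβ2) hu
      calc phiFn (-(u * β)) / (u * β ^ 2 * u) ≤ psiFn (-(u * β)) / (u * β ^ 2 * u) := by gcongr
        _ = psiFn (-(u * β)) / (u ^ 2 * β ^ 2) := by ring_nf

private lemma young_aux (a z : ℝ) : a * Real.exp z ≤ z * Real.exp z - Real.exp z + Real.exp a := by
  have h := Real.add_one_le_exp (a - z)
  have h2 : Real.exp (a - z) * Real.exp z = Real.exp a := by rw [← Real.exp_add]; ring_nf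
  nlinarith [Real.exp_pos z, mul_le_mul_of_nonneg_right h (Real.exp_pos z).le]

private lemma exp_abs_bound {y : ℝ} {lam a u : ℝ} (halam : a < lam)
    (hu : 0 ≤ u) (hua : u ≤ a) :
    |y| * Real.exp (u * y) ≤ |y| + ((lam - a) * Real.exp 1)⁻¹ * Real.exp (lam * y) := by
  have hC : (0:ℝ) ≤ ((lam - a) * Real.exp 1)⁻¹ * Real.exp (lam * y) := by
    have : (0:ℝ) < lam - a := by linarith
    positivity
  rcases le_or_gt 0 y with hy | hy
  · rw [abs_of_nonneg hy]
    have hlam_a : (0:ℝ) < lam - a := by linarith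
    have h2 : Real.exp (u * y) ≤ Real.exp (a * y) := Real.exp_le_exp.2 (by nlinarith)
    have t1 : (lam - a) * y ≤ Real.exp ((lam - a) * y - 1) := by
      have := Real.add_one_le_exp ((lam - a) * y - 1); linarith
    have t2 : Real.exp ((lam - a) * y - 1) = Real.exp ((lam - a) * y) * (Real.exp 1)⁻¹ := by
      rw [← Real.exp_neg, ← Real.exp_add]; ring_nf
    have t1' : (lam - a) * y * Real.exp 1 ≤ Real.exp ((lam - a) * y) := by
      rw [t2] at t1
      have hE := Real.exp_pos 1
      calc (lam - a) * y * Real.exp 1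
          ≤ Real.exp ((lam - a) * y) * (Real.exp 1)⁻¹ * Real.exp 1 :=
            mul_le_mul_of_nonneg_right t1 hE.le
        _ = Real.exp ((lam - a) * y) := by field_simp
    have t3 : y * Real.exp (a * y) ≤ ((lam - a) * Real.exp 1)⁻¹ * Real.exp (lam * y) := by
      rw [inv_mul_eq_div, le_div_iff₀ (by positivity)]
      calc y * Real.exp (a * y) * ((lam - a) * Real.exp 1)
          = ((lam - a) * y * Real.exp 1) * Real.exp (a * y) := by ring
        _ ≤ Real.exp ((lam - a) * y) * Real.exp (a * y) :=
            mul_le_mul_of_nonneg_right t1' (Real.exp_pos _).le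
        _ = Real.exp (lam * y) := by rw [← Real.exp_add]; ring_nf
    have hmono : y * Real.exp (u * y) ≤ y * Real.exp (a * y) := mul_le_mul_of_nonneg_left h2 hy
    linarith
  · rw [abs_of_neg hy]
    have h1 : Real.exp (u * y) ≤ 1 := by
      rw [show (1:ℝ) = Real.exp 0 by simp]
      exact Real.exp_le_exp.2 (by nlinarith)
    nlinarith [Real.exp_pos (u * y)]

private lemma exp_sub_one_abs_bound (x : ℝ) : |Real.exp x - 1| ≤ |x| * Real.exp x + |x| := by
  rcases le_or_gt 0 x with hx | hx
  · rw [abs_of_nonneg (by nlinarith [Real.add_one_le_exp x] : (0:ℝ) ≤ Real.exp x - 1),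
      abs_of_nonneg hx]
    have k1 := Real.add_one_le_exp (-x)
    have k2 : Real.exp (-x) * Real.exp x = 1 := by rw [← Real.exp_add]; simp
    nlinarith [mul_le_mul_of_nonneg_right k1 (Real.exp_pos x).le, Real.exp_pos x]
  · have h1 : Real.exp x ≤ 1 := by
      have := Real.exp_le_exp.2 hx.le
      simpa using this
    rw [abs_of_neg hx, abs_of_nonpos (by linarith : Real.exp x - 1 ≤ 0)]
    have k1 := Real.add_one_le_exp x
    nlinarith [mul_pos (neg_pos.2 hx) (Real.exp_pos x)]

private lemma psiFn_tendsto_zero (β : ℝ) :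
    Filter.Tendsto (fun u => PsiFn β u) (nhdsWithin 0 (Set.Ioi 0)) (nhds 0) := by
  by_cases hβ : β = 0
  · subst hβ
    have : (fun u : ℝ => PsiFn 0 u) = fun u => u / 2 := by funext u; simp [PsiFn]
    rw [this]
    have h0 : Filter.Tendsto (fun u : ℝ => u / 2) (nhds (0:ℝ)) (nhds (0:ℝ)) := by
      simpa using (continuous_id.div_const 2).tendsto (0:ℝ)
    exact h0.mono_left nhdsWithin_le_nhds
  · have t1 : Filter.Tendsto (fun t : ℝ => phiFn t / t) (nhdsWithin 0 {(0:ℝ)}ᶜ) (nhds 0) := by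
      have h := hasDerivAt_iff_tendsto_slope.1 (hasDerivAt_phi 0)
      simp only [Real.exp_zero] at h
      have h' : Filter.Tendsto (slope phiFn 0) (nhdsWithin 0 {(0:ℝ)}ᶜ) (nhds 0) := by
        simpa using h
      refine h'.congr fun t => ?_
      simp [slope, phiFn]
      ring
    have t2 : Filter.Tendsto (fun u : ℝ => u * |β|) (nhdsWithin 0 (Set.Ioi 0))
        (nhdsWithin 0 {(0:ℝ)}ᶜ) := by
      rw [tendsto_nhdsWithin_iff]
      constructor
      · simpa using ((continuous_mul_right |β|).tendsto (0:ℝ)).mono_left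
          nhdsWithin_le_nhds
      · filter_upwards [self_mem_nhdsWithin] with u hu
        have hu' : (0:ℝ) < u := hu
        have : u * |β| ≠ 0 := by positivity
        simpa using this
    have t3 : Filter.Tendsto (fun u : ℝ => phiFn (u * |β|) / (u * |β|) * (|β| / β ^ 2))
        (nhdsWithin 0 (Set.Ioi 0)) (nhds 0) := by
      have := (t1.comp t2).mul_const (|β| / β ^ 2)
      simpa using this
    refine t3.congr' ?_
    filter_upwards [self_mem_nhdsWithin] with u hu
    have hu' : (0:ℝ) < u := hu
    have hβ2 : β ^ 2 ≠ 0 := pow_ne_zero 2 hβ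
    rcases lt_or_gt_of_ne hβ with hβneg | hβpos
    · have habs : |β| = -β := abs_of_neg hβneg
      rw [PsiFn, if_neg (not_lt.2 hβneg.le), if_neg hβ, habs]
      rw [show -(u * β) = u * -β by ring]
      field_simp
    · have habs : |β| = β := abs_of_pos hβpos
      rw [PsiFn, if_pos hβpos, habs]
      field_simp

end Helpers

/-- Theorem 3.2 (entropy inequality ⇒ moment generating function bound): if
`Ent(e^{uF}) ≤ u·Φ_β(u)·E[V e^{uF}]` for all `u ∈ (0, λ]`, then
`log E[e^{λ(F − EF)}] ≤ (Ψ_β(λ)·θ / (1 − Φ_β(λ)·θ)) · log E[e^{λV/θ}]`. -/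
theorem entropy_method_mgf_bound {Ω : Type*} [MeasurableSpace Ω]
    (P : Measure Ω) [IsProbabilityMeasure P]
    (F V : Ω → ℝ) (hF : Integrable F P) (hV : ∀ ω, 0 ≤ V ω)
    (β lam θ : ℝ) (hlam : 0 < lam)
    (hFexp : Integrable (fun ω => Real.exp (lam * F ω)) P)
    (hθ : 0 < θ) (hΦθ : PhiFn β lam * θ < 1)
    (hVexp : Integrable (fun ω => Real.exp (lam * V ω / θ)) P)
    (hEnt : ∀ u : ℝ, 0 < u → u ≤ lam →
      Ent P (fun ω => Real.exp (u * F ω)) ≤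
        u * PhiFn β u * ∫ ω, V ω * Real.exp (u * F ω) ∂P) :
    Real.log (∫ ω, Real.exp (lam * (F ω - ∫ ω', F ω' ∂P)) ∂P) ≤
      PsiFn β lam * θ / (1 - PhiFn β lam * θ) *
        Real.log (∫ ω, Real.exp (lam * V ω / θ) ∂P) := by
  classical
  have hFm : AEStronglyMeasurable F P := hF.1
  have hexp_meas : ∀ u : ℝ, AEStronglyMeasurable (fun ω => Real.exp (u * F ω)) P := fun u =>
    (Real.continuous_exp.comp (continuous_const.mul continuous_id)).comp_aestronglyMeasurable hFm
  have hexp_bd : ∀ u : ℝ, 0 ≤ u → u ≤ lam → ∀ ω,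
      Real.exp (u * F ω) ≤ Real.exp (lam * F ω) + 1 := by
    intro u h0 h1 ω
    rcases le_or_gt 0 (F ω) with h | h
    · have h2 : u * F ω ≤ lam * F ω := by nlinarith
      have := Real.exp_le_exp.2 h2
      linarith
    · have h2 : u * F ω ≤ 0 := by nlinarith
      have h3 : Real.exp (u * F ω) ≤ 1 := by
        rw [show (1:ℝ) = Real.exp 0 by simp]
        exact Real.exp_le_exp.2 h2
      have := Real.exp_pos (lam * F ω)
      linarith
  have hexp_int : ∀ u : ℝ, 0 ≤ u → u ≤ lam → Integrable (fun ω => Real.exp (u * F ω)) P := by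
    intro u h0 h1
    refine (hFexp.add (integrable_const 1)).mono' (hexp_meas u) ?_
    filter_upwards with ω
    rw [Real.norm_eq_abs, abs_of_pos (Real.exp_pos _)]
    exact hexp_bd u h0 h1 ω
  have hFe_int : ∀ a : ℝ, 0 ≤ a → a < lam →
      Integrable (fun ω => F ω * Real.exp (a * F ω)) P := by
    intro a h0 h1
    refine (hF.abs.add (hFexp.const_mul ((lam - a) * Real.exp 1)⁻¹)).mono'
      (hFm.mul (hexp_meas a)) ?_
    filter_upwards with ω
    rw [Real.norm_eq_abs, abs_mul, abs_of_pos (Real.exp_pos _)]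
    exact exp_abs_bound h1 h0 le_rfl
  have hG_pos : ∀ u : ℝ, 0 ≤ u → u ≤ lam → 0 < ∫ ω, Real.exp (u * F ω) ∂P := by
    intro u h0 h1
    rw [integral_pos_iff_support_of_nonneg (fun ω => (Real.exp_pos _).le) (hexp_int u h0 h1)]
    have hs : Function.support (fun ω => Real.exp (u * F ω)) = Set.univ := by
      ext ω; simp [Function.mem_support, (Real.exp_pos _).ne']
    rw [hs, measure_univ]
    exact one_pos
  set m := ∫ ω, F ω ∂P with hm
  set R := ∫ ω, Real.exp (lam * V ω / θ) ∂P with hR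
  have hR1 : (1:ℝ) ≤ R := by
    rw [hR, show (1:ℝ) = ∫ _ω, (1:ℝ) ∂P by simp]
    apply integral_mono (integrable_const 1) hVexp
    intro ω
    have h0 := hV ω
    exact Real.one_le_exp (by positivity)
  have hRpos : (0:ℝ) < R := lt_of_lt_of_le one_pos hR1
  have hL0 : (0:ℝ) ≤ Real.log R := Real.log_nonneg hR1
  have hD : (0:ℝ) < 1 - PhiFn β lam * θ := by linarith
  have hPhl0 : (0:ℝ) ≤ PhiFn β lam := PhiFn_nonneg hlam
  set c := θ * Real.log R / (1 - PhiFn β lam * θ) with hc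
  have hc0 : (0:ℝ) ≤ c := by rw [hc]; positivity
  have hVm : AEStronglyMeasurable V P := by
    have h1 : AEStronglyMeasurable (fun ω => Real.exp (lam * V ω / θ)) P := hVexp.1
    have h2 : AEStronglyMeasurable (fun ω => (θ / lam) * Real.log (Real.exp (lam * V ω / θ))) P :=
      ((Real.measurable_log.comp_aemeasurable h1.aemeasurable).aestronglyMeasurable).const_mul _
    refine h2.congr ?_
    filter_upwards with ω
    rw [Real.log_exp]
    field_simp
  have hVe_int : ∀ x : ℝ, 0 < x → x < lam →
      Integrable (fun ω => V ω * Real.exp (x * F ω)) P := by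
    intro x hx hxl
    have hg : Integrable (fun ω => (θ / lam) * ((x * (F ω * Real.exp (x * F ω))
        - Real.exp (x * F ω)) + Real.exp (lam * V ω / θ))) P :=
      ((((hFe_int x hx.le hxl).const_mul x).sub (hexp_int x hx.le hxl.le)).add hVexp).const_mul _
    refine hg.mono' (hVm.mul (hexp_meas x)) ?_
    filter_upwards with ω
    rw [Real.norm_eq_abs, abs_of_nonneg (mul_nonneg (hV ω) (Real.exp_pos _).le)]
    have hy := young_aux (lam * V ω / θ) (x * F ω)
    have he : V ω * Real.exp (x * F ω) =
        (θ / lam) * ((lam * V ω / θ) * Real.exp (x * F ω)) := by field_simp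
    rw [he]
    have h2 : (lam * V ω / θ) * Real.exp (x * F ω) ≤
        (x * (F ω * Real.exp (x * F ω)) - Real.exp (x * F ω)) + Real.exp (lam * V ω / θ) := by
      nlinarith [hy]
    have hθl : (0:ℝ) ≤ θ / lam := by positivity
    exact mul_le_mul_of_nonneg_left h2 hθl
  have hEnt_eq : ∀ x : ℝ, 0 < x →
      Ent P (fun ω => Real.exp (x * F ω)) =
        x * (∫ ω, F ω * Real.exp (x * F ω) ∂P)
          - (∫ ω, Real.exp (x * F ω) ∂P) * Real.log (∫ ω, Real.exp (x * F ω) ∂P) := by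
    intro x hx
    unfold Ent
    congr 1
    have h1 : (fun ω => Real.exp (x * F ω) * Real.log (Real.exp (x * F ω)))
        = fun ω => x * (F ω * Real.exp (x * F ω)) := by
      funext ω; rw [Real.log_exp]; ring
    rw [h1, integral_const_mul]
  have hdual : ∀ x : ℝ, 0 < x → x < lam →
      (lam / θ) * (∫ ω, V ω * Real.exp (x * F ω) ∂P) ≤
        x * (∫ ω, F ω * Real.exp (x * F ω) ∂P)
          - (∫ ω, Real.exp (x * F ω) ∂P) * Real.log (∫ ω, Real.exp (x * F ω) ∂P)
          + (∫ ω, Real.exp (x * F ω) ∂P) * Real.log R := by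
    intro x hx hxl
    have hMpos : 0 < ∫ ω, Real.exp (x * F ω) ∂P := hG_pos x hx.le hxl.le
    have hMne : (∫ ω, Real.exp (x * F ω) ∂P) ≠ 0 := ne_of_gt hMpos
    have hRne : R ≠ 0 := ne_of_gt hRpos
    have hpoint : ∀ ω, (lam / θ) * (V ω * Real.exp (x * F ω)) ≤
        x * (F ω * Real.exp (x * F ω))
          + (Real.log R - Real.log (∫ ω, Real.exp (x * F ω) ∂P)) * Real.exp (x * F ω)
          - Real.exp (x * F ω)
          + ((∫ ω, Real.exp (x * F ω) ∂P) / R) * Real.exp (lam * V ω / θ) := by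
      intro ω
      have hy := young_aux (lam * V ω / θ)
        (x * F ω + Real.log R - Real.log (∫ ω, Real.exp (x * F ω) ∂P))
      have he : Real.exp (x * F ω + Real.log R - Real.log (∫ ω, Real.exp (x * F ω) ∂P))
          = Real.exp (x * F ω) * R / (∫ ω, Real.exp (x * F ω) ∂P) := by
        rw [Real.exp_sub, Real.exp_add, Real.exp_log hRpos, Real.exp_log hMpos]
      rw [he] at hy
      have hMR : (0:ℝ) ≤ (∫ ω, Real.exp (x * F ω) ∂P) / R := by positivity
      have h2 := mul_le_mul_of_nonneg_right hy hMR
      have e1 : lam * V ω / θ * (Real.exp (x * F ω) * R / (∫ ω, Real.exp (x * F ω) ∂P))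
            * ((∫ ω, Real.exp (x * F ω) ∂P) / R)
          = (lam / θ) * (V ω * Real.exp (x * F ω)) := by field_simp
      have e2 : ((x * F ω + Real.log R - Real.log (∫ ω, Real.exp (x * F ω) ∂P))
              * (Real.exp (x * F ω) * R / (∫ ω, Real.exp (x * F ω) ∂P))
            - Real.exp (x * F ω) * R / (∫ ω, Real.exp (x * F ω) ∂P)
            + Real.exp (lam * V ω / θ)) * ((∫ ω, Real.exp (x * F ω) ∂P) / R)
          = x * (F ω * Real.exp (x * F ω))
            + (Real.log R - Real.log (∫ ω, Real.exp (x * F ω) ∂P)) * Real.exp (x * F ω)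
            - Real.exp (x * F ω)
            + ((∫ ω, Real.exp (x * F ω) ∂P) / R) * Real.exp (lam * V ω / θ) := by
        field_simp; ring
      rw [e1, e2] at h2
      exact h2
    have hi1 : Integrable (fun ω => x * (F ω * Real.exp (x * F ω))) P :=
      (hFe_int x hx.le hxl).const_mul x
    have hi2 : Integrable (fun ω =>
        (Real.log R - Real.log (∫ ω, Real.exp (x * F ω) ∂P)) * Real.exp (x * F ω)) P :=
      (hexp_int x hx.le hxl.le).const_mul _
    have hi3 : Integrable (fun ω => Real.exp (x * F ω)) P := hexp_int x hx.le hxl.le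
    have hi4 : Integrable (fun ω =>
        ((∫ ω, Real.exp (x * F ω) ∂P) / R) * Real.exp (lam * V ω / θ)) P :=
      hVexp.const_mul _
    have hrhs : Integrable (fun ω =>
        x * (F ω * Real.exp (x * F ω))
          + (Real.log R - Real.log (∫ ω, Real.exp (x * F ω) ∂P)) * Real.exp (x * F ω)
          - Real.exp (x * F ω)
          + ((∫ ω, Real.exp (x * F ω) ∂P) / R) * Real.exp (lam * V ω / θ)) P :=
      ((hi1.add hi2).sub hi3).add hi4
    have hi123 : Integrable (fun ω =>
        x * (F ω * Real.exp (x * F ω))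
          + (Real.log R - Real.log (∫ ω, Real.exp (x * F ω) ∂P)) * Real.exp (x * F ω)
          - Real.exp (x * F ω)) P := (hi1.add hi2).sub hi3
    have hi12 : Integrable (fun ω =>
        x * (F ω * Real.exp (x * F ω))
          + (Real.log R - Real.log (∫ ω, Real.exp (x * F ω) ∂P)) * Real.exp (x * F ω)) P :=
      hi1.add hi2
    have hint := integral_mono ((hVe_int x hx hxl).const_mul (lam / θ)) hrhs hpoint
    rw [integral_add hi123 hi4, integral_sub hi12 hi3,
      integral_add hi1 hi2, integral_const_mul, integral_const_mul, integral_const_mul,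
      integral_const_mul] at hint
    have hfin : ((∫ ω, Real.exp (x * F ω) ∂P) / R) * R = ∫ ω, Real.exp (x * F ω) ∂P := by
      field_simp
    nlinarith [hint]
  have hGd : ∀ x : ℝ, 0 < x → x < lam →
      HasDerivAt (fun u => ∫ ω, Real.exp (u * F ω) ∂P)
        (∫ ω, F ω * Real.exp (x * F ω) ∂P) x := by
    intro x hx hxl
    set a := (x + lam) / 2 with ha
    have hax : x < a := by rw [ha]; linarith
    have hal : a < lam := by rw [ha]; linarith
    set ε := (min x (a - x)) / 2 with hε
    have hεpos : 0 < ε := by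
      rw [hε]
      have h0 : 0 < min x (a - x) := lt_min hx (by linarith)
      positivity
    have hball : ∀ u ∈ Metric.ball x ε, 0 ≤ u ∧ u ≤ a := by
      intro u hu
      rw [Metric.mem_ball, Real.dist_eq, abs_lt] at hu
      have h1 : min x (a - x) ≤ x := min_le_left _ _
      have h2 : min x (a - x) ≤ a - x := min_le_right _ _
      have h0 : 0 < min x (a - x) := lt_min hx (by linarith)
      constructor
      · nlinarith [hu.1]
      · nlinarith [hu.2]
    have key := hasDerivAt_integral_of_dominated_loc_of_deriv_le (μ := P) (x₀ := x)
      (F := fun (u : ℝ) ω => Real.exp (u * F ω))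
      (F' := fun (u : ℝ) ω => F ω * Real.exp (u * F ω))
      (bound := fun ω => |F ω| + ((lam - a) * Real.exp 1)⁻¹ * Real.exp (lam * F ω))
      (Metric.ball_mem_nhds x hεpos) (Filter.Eventually.of_forall fun u => hexp_meas u) (hexp_int x hx.le hxl.le)
      (hFm.mul (hexp_meas x))
      (by
        filter_upwards with ω
        intro u hu
        rw [Real.norm_eq_abs, abs_mul, abs_of_pos (Real.exp_pos _)]
        exact exp_abs_bound hal (hball u hu).1 (hball u hu).2)
      (hF.abs.add (hFexp.const_mul _))
      (by
        filter_upwards with ω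
        intro u _
        have h : HasDerivAt (fun v : ℝ => Real.exp (v * F ω))
            (Real.exp (u * F ω) * F ω) u := (hasDerivAt_mul_const (F ω)).exp
        simpa [mul_comm] using h)
    exact key.2
  have hKd : ∀ x : ℝ, 0 < x → x < lam →
      ∃ d', HasDerivAt (fun u => Real.log (∫ ω, Real.exp (u * F ω) ∂P) / u
        - c / lam * PsiFn β u) d' x ∧ d' ≤ 0 := by
    intro x hx hxl
    obtain ⟨d, hdΨ, hdge⟩ := psiFn_deriv_bound (β := β) hx
    have hMpos : 0 < ∫ ω, Real.exp (x * F ω) ∂P := hG_pos x hx.le hxl.le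
    have h1 : HasDerivAt (fun u => Real.log (∫ ω, Real.exp (u * F ω) ∂P))
        ((∫ ω, F ω * Real.exp (x * F ω) ∂P) / (∫ ω, Real.exp (x * F ω) ∂P)) x :=
      (hGd x hx hxl).log (ne_of_gt hMpos)
    have h2 : HasDerivAt (fun u => Real.log (∫ ω, Real.exp (u * F ω) ∂P) / u)
        ((((∫ ω, F ω * Real.exp (x * F ω) ∂P) / (∫ ω, Real.exp (x * F ω) ∂P)) * x
          - Real.log (∫ ω, Real.exp (x * F ω) ∂P) * 1) / x ^ 2) x :=
      h1.div (hasDerivAt_id x) (ne_of_gt hx)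
    refine ⟨_, h2.sub (hdΨ.const_mul (c / lam)), ?_⟩
    have hEnt' := hEnt x hx hxl.le
    rw [hEnt_eq x hx] at hEnt'
    have hdual' := hdual x hx hxl
    have hIv2 : (∫ ω, V ω * Real.exp (x * F ω) ∂P) ≤
        (θ / lam) * (x * (∫ ω, F ω * Real.exp (x * F ω) ∂P)
          - (∫ ω, Real.exp (x * F ω) ∂P) * Real.log (∫ ω, Real.exp (x * F ω) ∂P)
          + (∫ ω, Real.exp (x * F ω) ∂P) * Real.log R) := by
      have e0 : (θ / lam) * ((lam / θ) * (∫ ω, V ω * Real.exp (x * F ω) ∂P))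
          = ∫ ω, V ω * Real.exp (x * F ω) ∂P := by field_simp
      calc (∫ ω, V ω * Real.exp (x * F ω) ∂P)
          = (θ / lam) * ((lam / θ) * (∫ ω, V ω * Real.exp (x * F ω) ∂P)) := e0.symm
        _ ≤ _ := mul_le_mul_of_nonneg_left hdual' (by positivity)
    set A := ∫ ω, F ω * Real.exp (x * F ω) ∂P with hA
    set M := ∫ ω, Real.exp (x * F ω) ∂P with hMdef
    have hxP0 : (0:ℝ) ≤ x * PhiFn β x := mul_nonneg hx.le (PhiFn_nonneg hx)
    have hEnt'' : x * A - M * Real.log M ≤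
        (x * PhiFn β x) * ((θ / lam) * (x * A - M * Real.log M + M * Real.log R)) := by
      calc x * A - M * Real.log M ≤ x * PhiFn β x * ∫ ω, V ω * Real.exp (x * F ω) ∂P := hEnt'
        _ ≤ _ := mul_le_mul_of_nonneg_left hIv2 hxP0
    have hple : x * PhiFn β x * θ / lam ≤ PhiFn β lam * θ := by
      have hmm : x * PhiFn β x ≤ lam * PhiFn β lam :=
        mul_le_mul hxl.le (PhiFn_mono hx hxl.le) (PhiFn_nonneg hx) hlam.le
      rw [div_le_iff₀ hlam]
      nlinarith [mul_le_mul_of_nonneg_right hmm hθ.le]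
    have hp0 : (0:ℝ) ≤ x * PhiFn β x * θ / lam := by positivity
    have key : (x * A - M * Real.log M) * (1 - PhiFn β lam * θ) ≤
        (x * PhiFn β x * θ / lam) * (M * Real.log R) := by
      have hEnt3 : x * A - M * Real.log M ≤
          (x * PhiFn β x * θ / lam) * (x * A - M * Real.log M + M * Real.log R) := by
        have e1 : (x * PhiFn β x) * ((θ / lam) * (x * A - M * Real.log M + M * Real.log R))
            = (x * PhiFn β x * θ / lam) * (x * A - M * Real.log M + M * Real.log R) := by
          ring
        rw [e1] at hEnt''
        exact hEnt''
      rcases le_or_gt 0 (x * A - M * Real.log M) with hEV | hEV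
      · have a1 : (x * A - M * Real.log M) * (1 - PhiFn β lam * θ) ≤
            (x * A - M * Real.log M) * (1 - x * PhiFn β x * θ / lam) := by
          nlinarith [mul_le_mul_of_nonneg_left hple hEV]
        nlinarith [hEnt3]
      · have a2 : (0:ℝ) ≤ (x * PhiFn β x * θ / lam) * (M * Real.log R) :=
          mul_nonneg hp0 (mul_nonneg hMpos.le hL0)
        nlinarith [mul_neg_of_neg_of_pos hEV hD]
    have e4 : ((A / M) * x - Real.log M * 1) / x ^ 2
        = (x * A - M * Real.log M) / (x ^ 2 * M) := by
      field_simp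
    have T2 : (x * A - M * Real.log M) / (x ^ 2 * M) ≤ c / lam * (PhiFn β x / x) := by
      rw [div_le_iff₀ (by positivity : (0:ℝ) < x ^ 2 * M)]
      have e5 : c / lam * (PhiFn β x / x) * (x ^ 2 * M)
          = (x * PhiFn β x * θ / lam) * (M * Real.log R) / (1 - PhiFn β lam * θ) := by
        rw [hc]
        field_simp
      rw [e5, le_div_iff₀ hD]
      exact key
    have T3 : c / lam * (PhiFn β x / x) ≤ c / lam * d :=
      mul_le_mul_of_nonneg_left hdge (by positivity)
    rw [e4]
    linarith [T2, T3]
  have hGcont : ∀ ε : ℝ, 0 < ε → ε < lam →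
      ContinuousOn (fun u => ∫ ω, Real.exp (u * F ω) ∂P) (Set.Icc ε lam) := by
    intro ε hε hεl x hx
    apply continuousWithinAt_of_dominated (bound := fun ω => Real.exp (lam * F ω) + 1)
    · exact Filter.Eventually.of_forall fun u => hexp_meas u
    · filter_upwards [self_mem_nhdsWithin] with u hu
      filter_upwards with ω
      rw [Real.norm_eq_abs, abs_of_pos (Real.exp_pos _)]
      exact hexp_bd u (le_trans hε.le hu.1) hu.2 ω
    · exact hFexp.add (integrable_const 1)
    · filter_upwards with ω
      exact ((Real.continuous_exp.comp
        (continuous_id.mul continuous_const)).continuousAt).continuousWithinAt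
  have hAnti : ∀ ε : ℝ, 0 < ε → ε < lam →
      Real.log (∫ ω, Real.exp (lam * F ω) ∂P) / lam - c / lam * PsiFn β lam ≤
        Real.log (∫ ω, Real.exp (ε * F ω) ∂P) / ε - c / lam * PsiFn β ε := by
    intro ε hε hεl
    have h1 : AntitoneOn (fun u => Real.log (∫ ω, Real.exp (u * F ω) ∂P) / u
        - c / lam * PsiFn β u) (Set.Icc ε lam) := by
      apply antitoneOn_of_deriv_nonpos (convex_Icc _ _)
      · apply ContinuousOn.sub
        · apply ContinuousOn.div
          · apply ContinuousOn.log (hGcont ε hε hεl)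
            intro x hx
            exact ne_of_gt (hG_pos x (le_trans hε.le hx.1) hx.2)
          · exact continuousOn_id
          · intro x hx
            exact ne_of_gt (lt_of_lt_of_le hε hx.1)
        · intro x hx
          obtain ⟨d, hd, -⟩ := psiFn_deriv_bound (β := β) (lt_of_lt_of_le hε hx.1)
          exact (continuousAt_const.mul hd.continuousAt).continuousWithinAt
      · rw [interior_Icc]
        intro x hx
        obtain ⟨d', hd', -⟩ := hKd x (lt_trans hε hx.1) hx.2
        exact hd'.differentiableAt.differentiableWithinAt
      · rw [interior_Icc]
        intro x hx
        obtain ⟨d', hd', hd0⟩ := hKd x (lt_trans hε hx.1) hx.2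
        rw [hd'.deriv]
        exact hd0
    exact h1 (Set.mem_Icc.2 ⟨le_refl ε, hεl.le⟩) (Set.mem_Icc.2 ⟨hεl.le, le_refl lam⟩) hεl.le
  have hTendMain : Filter.Tendsto
      (fun ε => ((∫ ω, Real.exp (ε * F ω) ∂P) - 1) / ε - c / lam * PsiFn β ε)
      (nhdsWithin 0 (Set.Ioi 0)) (nhds m) := by
    have h1 : Filter.Tendsto (fun ε => ∫ ω, (Real.exp (ε * F ω) - 1) / ε ∂P)
        (nhdsWithin 0 (Set.Ioi 0)) (nhds m) := by
      apply tendsto_integral_filter_of_dominated_convergence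
        (bound := fun ω => 2 * |F ω| + ((lam - lam / 2) * Real.exp 1)⁻¹ * Real.exp (lam * F ω))
      · apply Filter.Eventually.of_forall
        intro ε
        exact (((Real.continuous_exp.comp (continuous_const.mul continuous_id)).sub
          continuous_const).div_const ε).comp_aestronglyMeasurable hFm
      · filter_upwards [Ioc_mem_nhdsGT_of_mem
          (Set.mem_Ico.2 ⟨le_refl (0:ℝ), half_pos hlam⟩)] with ε hε
        filter_upwards with ω
        rw [Real.norm_eq_abs, abs_div, abs_of_pos hε.1, div_le_iff₀ hε.1]
        have hb1 := exp_sub_one_abs_bound (ε * F ω)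
        have hb2 : |ε * F ω| = ε * |F ω| := by rw [abs_mul, abs_of_pos hε.1]
        rw [hb2] at hb1
        have hb3 := exp_abs_bound (y := F ω) (lam := lam) (a := lam / 2)
          (by linarith) hε.1.le hε.2
        nlinarith [mul_le_mul_of_nonneg_left hb3 hε.1.le, abs_nonneg (F ω)]
      · exact (hF.abs.const_mul 2).add (hFexp.const_mul _)
      · filter_upwards with ω
        have h0 : HasDerivAt (fun t : ℝ => Real.exp (t * F ω)) (F ω) 0 := by
          simpa using (hasDerivAt_mul_const (x := (0:ℝ)) (F ω)).exp
        have h1 := hasDerivAt_iff_tendsto_slope.1 h0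
        have h2 : Filter.Tendsto (fun ε : ℝ => (Real.exp (ε * F ω) - 1) / ε)
            (nhdsWithin 0 {(0:ℝ)}ᶜ) (nhds (F ω)) := by
          refine h1.congr fun t => ?_
          simp [slope]
          ring
        exact h2.mono_left (nhdsWithin_mono 0 (fun y hy => ne_of_gt hy))
    have h2eq : ∀ᶠ ε in nhdsWithin (0:ℝ) (Set.Ioi 0),
        (∫ ω, (Real.exp (ε * F ω) - 1) / ε ∂P) = ((∫ ω, Real.exp (ε * F ω) ∂P) - 1) / ε := by
      filter_upwards [Ioo_mem_nhdsGT_of_mem (Set.mem_Ico.2 ⟨le_refl (0:ℝ), hlam⟩)] with ε hε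
      have hi : Integrable (fun ω => Real.exp (ε * F ω)) P := hexp_int ε hε.1.le hε.2.le
      have e1 : (fun ω => (Real.exp (ε * F ω) - 1) / ε)
          = fun ω => ε⁻¹ * (Real.exp (ε * F ω) - 1) := by
        funext ω; ring
      rw [e1, integral_const_mul, integral_sub hi (integrable_const 1), integral_const]
      simp [measure_univ]
      ring
    have h1' := Filter.Tendsto.congr' h2eq h1
    have h3 : Filter.Tendsto (fun ε => c / lam * PsiFn β ε)
        (nhdsWithin (0:ℝ) (Set.Ioi 0)) (nhds 0) := by
      have := (psiFn_tendsto_zero β).const_mul (c / lam)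
      simpa [mul_comm] using this
    have h4 := h1'.sub h3
    simpa using h4
  have hfinal : Real.log (∫ ω, Real.exp (lam * F ω) ∂P) / lam - c / lam * PsiFn β lam ≤ m := by
    apply ge_of_tendsto hTendMain
    filter_upwards [Ioo_mem_nhdsGT_of_mem (Set.mem_Ico.2 ⟨le_refl (0:ℝ), hlam⟩)] with ε hε
    have h1 := hAnti ε hε.1 hε.2
    have h2 : Real.log (∫ ω, Real.exp (ε * F ω) ∂P) ≤ (∫ ω, Real.exp (ε * F ω) ∂P) - 1 :=
      Real.log_le_sub_one_of_pos (hG_pos ε hε.1.le hε.2.le)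
    have h3 : Real.log (∫ ω, Real.exp (ε * F ω) ∂P) / ε
        ≤ ((∫ ω, Real.exp (ε * F ω) ∂P) - 1) / ε := (div_le_div_iff_of_pos_right hε.1).2 h2
    linarith [h1, h3]
  have hsplit : (∫ ω, Real.exp (lam * (F ω - m)) ∂P)
      = (∫ ω, Real.exp (lam * F ω) ∂P) * Real.exp (-(lam * m)) := by
    rw [← integral_mul_const]
    congr 1
    funext ω
    rw [show lam * (F ω - m) = lam * F ω + -(lam * m) by ring, Real.exp_add]
  rw [hsplit, Real.log_mul (ne_of_gt (hG_pos lam hlam.le le_rfl)) (ne_of_gt (Real.exp_pos _)),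
    Real.log_exp]
  have hAfin : Real.log (∫ ω, Real.exp (lam * F ω) ∂P) ≤ lam * m + c * PsiFn β lam := by
    have h2 : Real.log (∫ ω, Real.exp (lam * F ω) ∂P) / lam ≤ m + c / lam * PsiFn β lam := by
      linarith [hfinal]
    have h3 := mul_le_mul_of_nonneg_right h2 hlam.le
    have e1 : Real.log (∫ ω, Real.exp (lam * F ω) ∂P) / lam * lam
        = Real.log (∫ ω, Real.exp (lam * F ω) ∂P) := by field_simp
    have e2 : (m + c / lam * PsiFn β lam) * lam = lam * m + c * PsiFn β lam := by
      field_simp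
    rw [e1, e2] at h3
    exact h3
  have e3 : c * PsiFn β lam = PsiFn β lam * θ / (1 - PhiFn β lam * θ) * Real.log R := by
    rw [hc]
    ring
  linarith [hAfin]
end

section
/- Let F be a bounded real random variable on a probability space, let a > 0, b ≥ 0 and λ ∈ (0, 2/a). Assume that for every u ∈ (0, λ], Ent(exp(uF)) ≤ (u²/2)·E[(a·F + b)·exp(uF)]. Then log E[exp(λ(F − E F))] ≤ λ²·(a·E F + b)/(2 − a·λ). -/
open MeasureTheory

theorem self_bounding_aux {Ω : Type*} [MeasurableSpace Ω]
    (P : Measure Ω) [IsProbabilityMeasure P]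
    (F : Ω → ℝ) (M : ℝ) (hM0 : 0 ≤ M) (hM : ∀ ω, |F ω| ≤ M) (hF : AEMeasurable F P)
    (a b lam : ℝ) (ha : 0 < a) (hb : 0 ≤ b) (hlam0 : 0 < lam) (hlam : lam < 2 / a)
    (hEnt : ∀ u : ℝ, 0 < u → u ≤ lam →
      Ent P (fun ω => Real.exp (u * F ω)) ≤
        u ^ 2 / 2 * ∫ ω, (a * F ω + b) * Real.exp (u * F ω) ∂P) :
    Real.log (∫ ω, Real.exp (lam * (F ω - ∫ ω', F ω' ∂P)) ∂P) ≤
      lam ^ 2 * (a * (∫ ω', F ω' ∂P) + b) / (2 - a * lam) := by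
  have halam : a * lam < 2 := by
    have := (lt_div_iff₀ ha).1 hlam; linarith
  set μ : ℝ := ∫ ω', F ω' ∂P with hμdef
  set φ : ℝ → ℝ := fun u => ∫ ω, Real.exp (u * F ω) ∂P with hφdef
  set φ' : ℝ → ℝ := fun u => ∫ ω, F ω * Real.exp (u * F ω) ∂P with hφ'def
  -- measurability
  have haesm : ∀ u : ℝ, AEStronglyMeasurable (fun ω => Real.exp (u * F ω)) P := fun u =>
    (Real.measurable_exp.comp_aemeasurable (hF.const_mul u)).aestronglyMeasurable
  have haesm2 : ∀ u : ℝ, AEStronglyMeasurable (fun ω => F ω * Real.exp (u * F ω)) P := fun u =>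
    (hF.mul (Real.measurable_exp.comp_aemeasurable (hF.const_mul u))).aestronglyMeasurable
  -- pointwise bounds
  have hub : ∀ (u : ℝ) (ω : Ω), Real.exp (u * F ω) ≤ Real.exp (|u| * M) := by
    intro u ω
    refine Real.exp_le_exp.2 ?_
    calc u * F ω ≤ |u * F ω| := le_abs_self _
      _ = |u| * |F ω| := abs_mul _ _
      _ ≤ |u| * M := mul_le_mul_of_nonneg_left (hM ω) (abs_nonneg u)
  -- integrability
  have hint : ∀ u : ℝ, Integrable (fun ω => Real.exp (u * F ω)) P := by
    intro u
    refine Integrable.mono' (integrable_const (Real.exp (|u| * M))) (haesm u)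
      (Filter.Eventually.of_forall fun ω => ?_)
    rw [Real.norm_eq_abs, Real.abs_exp]; exact hub u ω
  have hint2 : ∀ u : ℝ, Integrable (fun ω => F ω * Real.exp (u * F ω)) P := by
    intro u
    refine Integrable.mono' (integrable_const (M * Real.exp (|u| * M))) (haesm2 u)
      (Filter.Eventually.of_forall fun ω => ?_)
    rw [Real.norm_eq_abs, abs_mul, Real.abs_exp]
    exact mul_le_mul (hM ω) (hub u ω) (Real.exp_nonneg _) hM0
  -- positivity of φ
  have hφpos : ∀ u : ℝ, 0 < φ u := by
    intro u
    have h1 : Real.exp (-(|u| * M)) = ∫ _ω, Real.exp (-(|u| * M)) ∂P := by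
      rw [integral_const]; simp
    have h2 : (∫ _ω, Real.exp (-(|u| * M)) ∂P) ≤ φ u := by
      refine integral_mono (integrable_const _) (hint u) fun ω => ?_
      refine Real.exp_le_exp.2 ?_
      have : -(u * F ω) ≤ |u| * M := by
        calc -(u * F ω) ≤ |u * F ω| := neg_le_abs _
          _ = |u| * |F ω| := abs_mul _ _
          _ ≤ |u| * M := mul_le_mul_of_nonneg_left (hM ω) (abs_nonneg u)
      linarith
    calc (0:ℝ) < Real.exp (-(|u| * M)) := Real.exp_pos _
      _ ≤ φ u := h1.le.trans h2
  -- derivative of φ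
  have hφderiv : ∀ u : ℝ, HasDerivAt φ (φ' u) u := by
    intro u
    have := hasDerivAt_integral_of_dominated_loc_of_deriv_le (μ := P)
      (F := fun x ω => Real.exp (x * F ω)) (F' := fun x ω => F ω * Real.exp (x * F ω))
      (x₀ := u) (bound := fun _ω => M * Real.exp ((|u| + 1) * M)) (E := ℝ)
      (Metric.ball_mem_nhds u one_pos)
      (Filter.Eventually.of_forall fun x => haesm x)
      (hint u)
      (haesm2 u)
      (Filter.Eventually.of_forall fun ω => ?_)
      (integrable_const _)
      (Filter.Eventually.of_forall fun ω => ?_)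
    · exact this.2
    · intro x hx
      have hxabs : |x| ≤ |u| + 1 := by
        have : |x - u| < 1 := by rwa [Metric.mem_ball, Real.dist_eq] at hx
        calc |x| = |x - u + u| := by ring_nf
          _ ≤ |x - u| + |u| := abs_add_le _ _
          _ ≤ |u| + 1 := by linarith
      rw [Real.norm_eq_abs, abs_mul, Real.abs_exp]
      refine mul_le_mul (hM ω) ?_ (Real.exp_nonneg _) hM0
      refine Real.exp_le_exp.2 ?_
      calc x * F ω ≤ |x * F ω| := le_abs_self _
        _ = |x| * |F ω| := abs_mul _ _
        _ ≤ (|u| + 1) * M :=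
          mul_le_mul hxabs (hM ω) (abs_nonneg _) (by positivity)
    · intro x _hx
      simpa [mul_comm] using (hasDerivAt_mul_const (F ω)).exp
  have hφ0 : φ 0 = 1 := by simp [hφdef]
  have hφ'0 : φ' 0 = μ := by simp [hφ'def, hμdef]
  -- log-mgf
  set ψ : ℝ → ℝ := fun u => Real.log (φ u) with hψdef
  have hψderiv : ∀ u : ℝ, HasDerivAt ψ (φ' u / φ u) u := fun u =>
    (hφderiv u).log (hφpos u).ne'
  have hψ0 : ψ 0 = 0 := by rw [hψdef]; simp [hφ0]
  -- the function H
  set H : ℝ → ℝ := fun u => (2 - a * u) * ψ u - 2 * u * μ - b * u ^ 2 with hHdef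
  set H' : ℝ → ℝ := fun u => -a * ψ u + (2 - a * u) * (φ' u / φ u) - 2 * μ - b * (2 * u)
    with hH'def
  have hHderiv : ∀ u : ℝ, HasDerivAt H (H' u) u := by
    intro u
    have h1 : HasDerivAt (fun u => (2 - a * u) * ψ u)
        (-a * ψ u + (2 - a * u) * (φ' u / φ u)) u := by
      have hc : HasDerivAt (fun u : ℝ => 2 - a * u) (-a) u := by
        simpa using (((hasDerivAt_id u).const_mul a).const_sub (2:ℝ))
      exact hc.mul (hψderiv u)
    have h2 : HasDerivAt (fun u : ℝ => 2 * u * μ) (2 * μ) u := by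
      simpa [mul_assoc] using (hasDerivAt_mul_const μ).const_mul 2
    have h3 : HasDerivAt (fun u : ℝ => b * u ^ 2) (b * (2 * u)) u := by
      simpa using ((hasDerivAt_pow 2 u).const_mul b)
    exact (h1.sub h2).sub h3
  have hH0 : H 0 = 0 := by simp [hHdef, hψ0]
  have hH'0 : H' 0 = 0 := by
    rw [hH'def]; simp [hψ0, hφ0, hφ'0]
  -- entropy inequality in terms of φ, φ', ψ
  have hkey : ∀ u : ℝ, 0 < u → u ≤ lam → u * H' u - H u ≤ 0 := by
    intro u hu hul
    have hEnt2 : u * φ' u - φ u * ψ u ≤ u ^ 2 / 2 * (a * φ' u + b * φ u) := by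
      have h := hEnt u hu hul
      have e1 : (∫ ω, Real.exp (u * F ω) * Real.log (Real.exp (u * F ω)) ∂P) = u * φ' u := by
        have : (fun ω => Real.exp (u * F ω) * Real.log (Real.exp (u * F ω)))
            = fun ω => u * (F ω * Real.exp (u * F ω)) := by
          funext ω; rw [Real.log_exp]; ring
        rw [this, integral_const_mul]
      have e2 : (∫ ω, (a * F ω + b) * Real.exp (u * F ω) ∂P) = a * φ' u + b * φ u := by
        have : (fun ω => (a * F ω + b) * Real.exp (u * F ω))
            = fun ω => a * (F ω * Real.exp (u * F ω)) + b * Real.exp (u * F ω) := by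
          funext ω; ring
        rw [this, integral_add ((hint2 u).const_mul a) ((hint u).const_mul b),
          integral_const_mul, integral_const_mul]
      rw [Ent, e1, e2] at h
      calc u * φ' u - φ u * ψ u
          = u * φ' u - φ u * Real.log (φ u) := by rw [hψdef]
        _ ≤ u ^ 2 / 2 * (a * φ' u + b * φ u) := h
    set e : ℝ := φ' u / φ u with hedef
    have he : φ' u = e * φ u := by
      rw [hedef, div_mul_cancel₀ _ (hφpos u).ne']
    have hE' : u * e - ψ u ≤ u ^ 2 / 2 * (a * e + b) := by
      rw [he] at hEnt2
      have hφu := hφpos u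
      nlinarith [hEnt2, hφu]
    have hg : u * H' u - H u = u * (2 - a * u) * e - 2 * ψ u - b * u ^ 2 := by
      show u * (-a * ψ u + (2 - a * u) * (φ' u / φ u) - 2 * μ - b * (2 * u))
          - ((2 - a * u) * ψ u - 2 * u * μ - b * u ^ 2)
          = u * (2 - a * u) * e - 2 * ψ u - b * u ^ 2
      rw [← hedef]; ring
    rw [hg]
    nlinarith [hE']
  -- K = H/u is antitone on (0, lam]
  set K : ℝ → ℝ := fun u => H u / u with hKdef
  have hKderiv : ∀ u : ℝ, u ≠ 0 → HasDerivAt K ((H' u * u - H u * 1) / u ^ 2) u := by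
    intro u hu
    exact (hHderiv u).div (hasDerivAt_id u) hu
  have hanti : AntitoneOn K (Set.Ioc 0 lam) := by
    refine antitoneOn_of_deriv_nonpos (convex_Ioc 0 lam) ?_ ?_ ?_
    · intro u hu
      exact ((hKderiv u (ne_of_gt hu.1)).continuousAt).continuousWithinAt
    · intro u hu
      rw [interior_Ioc] at hu
      exact ((hKderiv u (ne_of_gt hu.1)).differentiableAt).differentiableWithinAt
    · intro u hu
      rw [interior_Ioc] at hu
      rw [(hKderiv u (ne_of_gt hu.1)).deriv]
      apply div_nonpos_of_nonpos_of_nonneg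
      · have := hkey u hu.1 hu.2.le
        nlinarith [this]
      · positivity
  -- K tends to 0 at 0+
  have htend : Filter.Tendsto K (nhdsWithin 0 (Set.Ioi 0)) (nhds 0) := by
    have h1 : Filter.Tendsto (slope H 0) (nhdsWithin 0 {(0:ℝ)}ᶜ) (nhds 0) := by
      have := hasDerivAt_iff_tendsto_slope.1 (hHderiv 0)
      rwa [hH'0] at this
    have h2 : Filter.Tendsto (slope H 0) (nhdsWithin 0 (Set.Ioi 0)) (nhds 0) :=
      h1.mono_left (nhdsWithin_mono 0 fun x hx => ne_of_gt hx)
    refine h2.congr fun u => ?_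
    rw [slope_def_field, hH0, hKdef]
    simp
  -- conclude H lam ≤ 0
  have hKlam : K lam ≤ 0 := by
    refine ge_of_tendsto htend ?_
    filter_upwards [Ioc_mem_nhdsGT_of_mem (Set.mem_Ico.2 ⟨le_refl 0, hlam0⟩)] with u hu
    exact hanti hu (Set.mem_Ioc.2 ⟨hlam0, le_refl lam⟩) hu.2
  have hHlam : H lam ≤ 0 := by
    have : H lam / lam ≤ 0 := hKlam
    have := (div_nonpos_iff.1 this)
    rcases this with ⟨h1, h2⟩ | ⟨h1, h2⟩
    · linarith
    · exact h1
  -- final computation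
  have hintegral : (∫ ω, Real.exp (lam * (F ω - μ)) ∂P) = Real.exp (-(lam * μ)) * φ lam := by
    have : (fun ω => Real.exp (lam * (F ω - μ)))
        = fun ω => Real.exp (-(lam * μ)) * Real.exp (lam * F ω) := by
      funext ω; rw [← Real.exp_add]; ring_nf
    rw [hφdef, this, integral_const_mul]
  rw [hintegral, Real.log_mul (Real.exp_ne_zero _) (hφpos lam).ne', Real.log_exp]
  rw [le_div_iff₀ (by linarith : (0:ℝ) < 2 - a * lam)]
  have hexp : (2 - a * lam) * ψ lam - 2 * lam * μ - b * lam ^ 2 ≤ 0 := hHlam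
  have : Real.log (φ lam) = ψ lam := rfl
  rw [this]
  nlinarith [hexp]

/-- The bounded case of Theorem 3.9: if `F` is bounded, `a > 0`, `b ≥ 0`,
`λ ∈ (0, 2/a)` and `Ent(e^{uF}) ≤ (u²/2)·E[(aF + b)e^{uF}]` for all `u ∈ (0, λ]`,
then `log E[e^{λ(F − EF)}] ≤ λ²(a·EF + b)/(2 − aλ)`. -/
theorem self_bounding_mgf_bound {Ω : Type*} [MeasurableSpace Ω]
    (P : Measure Ω) [IsProbabilityMeasure P]
    (F : Ω → ℝ) (hFbdd : ∃ M : ℝ, ∀ ω, |F ω| ≤ M)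
    (a b lam : ℝ) (ha : 0 < a) (hb : 0 ≤ b) (hlam0 : 0 < lam) (hlam : lam < 2 / a)
    (hEnt : ∀ u : ℝ, 0 < u → u ≤ lam →
      Ent P (fun ω => Real.exp (u * F ω)) ≤
        u ^ 2 / 2 * ∫ ω, (a * F ω + b) * Real.exp (u * F ω) ∂P) :
    Real.log (∫ ω, Real.exp (lam * (F ω - ∫ ω', F ω' ∂P)) ∂P) ≤
      lam ^ 2 * (a * (∫ ω', F ω' ∂P) + b) / (2 - a * lam) := by
  obtain ⟨M, hM⟩ := hFbdd
  have halam : a * lam < 2 := by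
    have := (lt_div_iff₀ ha).1 hlam; linarith
  by_cases hF : AEMeasurable F P
  · exact self_bounding_aux P F |M| (abs_nonneg M)
      (fun ω => (hM ω).trans (le_abs_self M)) hF a b lam ha hb hlam0 hlam hEnt
  · -- degenerate case: all integrals vanish
    have hFi : ¬ Integrable F P := fun h => hF h.1.aemeasurable
    have hF0 : (∫ ω', F ω' ∂P) = 0 := integral_undef hFi
    rw [hF0]
    have h2 : ¬ AEStronglyMeasurable (fun ω => Real.exp (lam * (F ω - 0))) P := by
      intro h
      apply hF
      have hA : AEMeasurable (fun ω => Real.exp (lam * (F ω - 0))) P := h.aemeasurable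
      have : F = fun ω => Real.log (Real.exp (lam * (F ω - 0))) / lam := by
        funext ω; rw [Real.log_exp]; field_simp; simp
      rw [this]
      exact (Real.measurable_log.comp_aemeasurable hA).div_const lam
    have h3 : (∫ ω, Real.exp (lam * (F ω - 0)) ∂P) = 0 :=
      integral_undef (fun h => h2 h.1)
    rw [h3, Real.log_zero]
    apply div_nonneg
    · positivity
    · linarith
end

section
/- Let X be a set, ξ ⊂ X a finite subset, J a nonempty finite index set, and for each j ∈ J let f_j : X → ℝ satisfy 0 ≤ f_j(x) ≤ 1 for all x. For a finite subset A ⊆ X define G(A) = max_{j ∈ J} Σ_{x ∈ A} f_j(x), and for n ∈ ℕ define G_n(A) = min(G(A), n). Then Σ_{x ∈ ξ} (G_n(ξ) − G_n(ξ \ {x})) ≤ G_n(ξ). -/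
/-- `G(A) = max_{j ∈ J} Σ_{x ∈ A} f_j(x)` for a nonempty finite index type `J`. -/
noncomputable def supSum {X ι : Type*} [Fintype ι] [Nonempty ι]
    (f : ι → X → ℝ) (A : Finset X) : ℝ :=
  Finset.univ.sup' Finset.univ_nonempty fun j => ∑ x ∈ A, f j x

/-- `G_n(A) = min(G(A), n)`. -/
noncomputable def supSumTrunc {X ι : Type*} [Fintype ι] [Nonempty ι]
    (f : ι → X → ℝ) (n : ℕ) (A : Finset X) : ℝ :=
  min (supSum f A) (n : ℝ)

/-- Key deterministic add-one-cost estimate from Theorem 7.1: if `0 ≤ f_j ≤ 1` for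
all `j`, then `Σ_{x ∈ ξ} (G_n(ξ) − G_n(ξ \ {x})) ≤ G_n(ξ)`. -/
theorem add_one_cost_sum_le {X : Type*} [DecidableEq X] {ι : Type*}
    [Fintype ι] [Nonempty ι]
    (f : ι → X → ℝ) (hf : ∀ j x, 0 ≤ f j x ∧ f j x ≤ 1)
    (ξ : Finset X) (n : ℕ) :
    ∑ x ∈ ξ, (supSumTrunc f n ξ - supSumTrunc f n (ξ.erase x)) ≤
      supSumTrunc f n ξ := by
  classical
  obtain ⟨j, -, hj⟩ := Finset.exists_mem_eq_sup' (Finset.univ_nonempty (α := ι))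
    (fun j => ∑ x ∈ ξ, f j x)
  have haj : supSum f ξ = ∑ x ∈ ξ, f j x := hj
  set a := supSum f ξ with ha
  have hnonneg : ∀ A : Finset X, 0 ≤ supSum f A := by
    intro A
    refine le_trans ?_ (Finset.le_sup' (fun j' => ∑ x ∈ A, f j' x) (Finset.mem_univ j))
    exact Finset.sum_nonneg fun x _ => (hf j x).1
  have hble : ∀ x ∈ ξ, supSum f (ξ.erase x) ≤ a := by
    intro x hx
    apply Finset.sup'_le
    intro j' _
    refine le_trans (Finset.sum_le_sum_of_subset_of_nonneg (Finset.erase_subset x ξ)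
      (fun y hy _ => (hf j' y).1)) ?_
    exact Finset.le_sup' (fun j'' => ∑ y ∈ ξ, f j'' y) (Finset.mem_univ j')
  have hbge : ∀ x ∈ ξ, a - f j x ≤ supSum f (ξ.erase x) := by
    intro x hx
    have h1 : ∑ y ∈ ξ.erase x, f j y + f j x = ∑ y ∈ ξ, f j y :=
      Finset.sum_erase_add ξ _ hx
    have h2 : ∑ y ∈ ξ.erase x, f j y ≤ supSum f (ξ.erase x) :=
      Finset.le_sup' (fun j' => ∑ y ∈ ξ.erase x, f j' y) (Finset.mem_univ j)
    rw [haj]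
    linarith
  simp only [supSumTrunc, ← ha]
  rcases le_or_gt a n with hcase | hcase
  · -- a ≤ n : truncation is inactive
    have h1 : min a (n : ℝ) = a := min_eq_left hcase
    rw [h1]
    have hsum : ∑ x ∈ ξ, (a - min (supSum f (ξ.erase x)) n)
        ≤ ∑ x ∈ ξ, f j x := by
      apply Finset.sum_le_sum
      intro x hx
      have hb := hble x hx
      have hg := hbge x hx
      have hm : min (supSum f (ξ.erase x)) (n : ℝ) = supSum f (ξ.erase x) :=
        min_eq_left (le_trans hb hcase)
      rw [hm]
      linarith
    exact hsum.trans_eq haj.symm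
  · -- n < a : truncation at n
    have h1 : min a (n : ℝ) = n := min_eq_right hcase.le
    rw [h1]
    rcases le_or_gt 1 (a - n) with hδ | hδ
    · -- every term is nonpositive
      have hsum : ∑ x ∈ ξ, ((n : ℝ) - min (supSum f (ξ.erase x)) n) ≤ 0 := by
        apply Finset.sum_nonpos
        intro x hx
        have hb := hbge x hx
        have hc1 := (hf j x).2
        have hn : (n : ℝ) ≤ supSum f (ξ.erase x) := by linarith
        rw [min_eq_right hn]
        simp
      exact hsum.trans (Nat.cast_nonneg n)
    · rcases Nat.eq_zero_or_pos n with hn | hn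
      · -- n = 0 : everything truncates to 0
        subst hn
        simp only [Nat.cast_zero]
        apply Finset.sum_nonpos
        intro x hx
        have h0 := hnonneg (ξ.erase x)
        rw [min_eq_right h0]
        simp
      · -- main case: 0 < a - n < 1, 1 ≤ n
        have hn1 : (1 : ℝ) ≤ n := by exact_mod_cast hn
        have hsum : ∑ x ∈ ξ, ((n : ℝ) - min (supSum f (ξ.erase x)) n)
            ≤ ∑ x ∈ ξ, f j x * (1 - (a - n)) := by
          apply Finset.sum_le_sum
          intro x hx
          have hb := hbge x hx
          have hc0 := (hf j x).1
          have hc1 := (hf j x).2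
          have hmin : min (a - f j x) (n : ℝ) ≤ min (supSum f (ξ.erase x)) n :=
            min_le_min hb le_rfl
          rcases le_total (a - f j x) (n : ℝ) with h | h
          · rw [min_eq_left h] at hmin
            nlinarith
          · rw [min_eq_right h] at hmin
            nlinarith
        rw [← Finset.sum_mul, ← haj] at hsum
        have key : a * (1 - (a - n)) ≤ n := by nlinarith
        linarith
end
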